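/- arXiv:2210.09751 — 4 statements merged into one kernel-verified Lean document; each statement's English description precedes it below -/
import Mathlib

section
/- Let f be a continuous self-map of a compact metric space X with finitely many non-wandering points, and let Y ⊆ X be an f-invariant set. Then for any finite set S = {x_1,…,x_l} ⊆ X \ NW(f), the local polynomial entropy of S on Y satisfies h_pol^{loc}(S;Y) ≤ l. -/
open Filter Topology TopologicalSpace Set
open scoped ENNReal

/-- The dynamic distance `d_n^f(x,y) = max_{0 ≤ k ≤ n-1} d(f^k x, f^k y)`. -/
noncomputable def dynDist {X : Type*} [MetricSpace X] (f : X → X) (n : ℕ) (x y : X) : ℝ :=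
  ((Finset.range n).sup fun k => nndist (f^[k] x) (f^[k] y) : NNReal)

/-- A finite set `E` is `(n,ε)`-separated for `f`. -/
def IsDynSeparated {X : Type*} [MetricSpace X] (f : X → X) (n : ℕ) (ε : ℝ) (E : Finset X) :
    Prop :=
  ∀ x ∈ E, ∀ y ∈ E, x ≠ y → ε ≤ dynDist f n x y

/-- `S(n,ε;Y)`: the maximal cardinality of an `(n,ε)`-separated subset of `Y`. -/
noncomputable def maxSep {X : Type*} [MetricSpace X] (f : X → X) (Y : Set X) (n : ℕ) (ε : ℝ) :
    ℕ :=
  sSup {m : ℕ | ∃ E : Finset X, ↑E ⊆ Y ∧ E.card = m ∧ IsDynSeparated f n ε E}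

/-- The polynomial entropy `h_pol(f;Y)`.  Since `ε ↦ S(n,ε;Y)` is nonincreasing, the limit as
`ε → 0` of the `limsup` coincides with the supremum over `ε > 0`. -/
noncomputable def polEnt {X : Type*} [MetricSpace X] (f : X → X) (Y : Set X) : ℝ≥0∞ :=
  ⨆ (ε : ℝ) (_ : 0 < ε),
    Filter.atTop.limsup fun n : ℕ =>
      ENNReal.ofReal (Real.log (maxSep f Y n ε) / Real.log n)

/-- The set of non-wandering points of `f`. -/
def nonWandering {X : Type*} [TopologicalSpace X] (f : X → X) : Set X :=
  {p | ∀ U ∈ nhds p, ∃ n : ℕ, 1 ≤ n ∧ (f^[n] '' U ∩ U).Nonempty}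

/-- The induced map `2^f` on the hyperspace of nonempty closed (= compact) subsets of a
compact metric space. -/
noncomputable def induced2 {X : Type*} [TopologicalSpace X] (f : X → X) (hf : Continuous f) :
    NonemptyCompacts X → NonemptyCompacts X :=
  fun A => ⟨⟨f '' A, A.isCompact.image hf⟩, A.nonempty.image f⟩

/-- The hyperspace `C(X)` of subcontinua (nonempty closed connected subsets) of `X`. -/
abbrev Subcontinua (X : Type*) [TopologicalSpace X] :=
  {A : NonemptyCompacts X // IsConnected (A : Set X)}

/-- The induced map `C(f)` on the hyperspace of subcontinua. -/
noncomputable def inducedC {X : Type*} [TopologicalSpace X] (f : X → X) (hf : Continuous f) :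
    Subcontinua X → Subcontinua X :=
  fun A => ⟨induced2 f hf A.1, A.2.image f hf.continuousOn⟩

/-- The `k`-fold symmetric product `X^{*k}`: nonempty subsets of `X` with at most `k` points. -/
abbrev SymProd (X : Type*) [TopologicalSpace X] (k : ℕ) :=
  {A : NonemptyCompacts X // (A : Set X).Finite ∧ (A : Set X).ncard ≤ k}

/-- The induced map `f^{*k}` on the `k`-fold symmetric product. -/
noncomputable def inducedSym {X : Type*} [TopologicalSpace X] (f : X → X) (hf : Continuous f)
    (k : ℕ) : SymProd X k → SymProd X k :=
  fun A => ⟨induced2 f hf A.1, A.2.1.image f, le_trans (Set.ncard_image_le A.2.1) A.2.2⟩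

/-- Sets `U 0, …, U (L-1)` are mutually singular for `f`. -/
def MutuallySingularSets {X : Type*} [TopologicalSpace X] (f : X → X) {L : ℕ}
    (U : Fin L → Set X) : Prop :=
  ∀ M : ℕ, ∃ x : X, ∃ n : Fin L → ℕ, (∀ j, 1 ≤ n j ∧ f^[n j] x ∈ U j) ∧
    ∀ i j, i ≠ j → (M : ℤ) < |(n i : ℤ) - (n j : ℤ)|

/-- A finite set `S ⊆ X \ NW(f)` is singular: it consists of mutually singular points, i.e.
every family of respective neighbourhoods of its points is mutually singular. -/
def IsSingularSet {X : Type*} [TopologicalSpace X] (f : X → X) (S : Set X) : Prop :=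
  S.Finite ∧ (∀ x ∈ S, x ∉ nonWandering f) ∧
  ∀ (L : ℕ) (x : Fin L → X), Function.Injective x → Set.range x = S →
    ∀ U : Fin L → Set X, (∀ j, U j ∈ nhds (x j)) → MutuallySingularSets f U

/-- The set of codings of length-`n` orbit segments of points of `Y` relative to the family
`F`, where the letter `none` stands for `Y_∞ = Y \ ⋃ F`. -/
def codings {X : Type*} (f : X → X) {L : ℕ} (F : Fin L → Set X) (Y : Set X) (n : ℕ) :
    Set (Fin n → Option (Fin L)) :=
  {w | ∃ x ∈ Y, ∀ j : Fin n, match w j with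
    | some i => f^[(j : ℕ)] x ∈ F i
    | none => f^[(j : ℕ)] x ∈ Y \ ⋃ i, F i}

/-- The polynomial entropy of `f` on `Y` relative to the family `F`:
`limsup_n log #A_n(F;Y) / log n`. -/
noncomputable def polEntRel {X : Type*} (f : X → X) {L : ℕ} (F : Fin L → Set X) (Y : Set X) :
    ℝ≥0∞ :=
  Filter.atTop.limsup fun n : ℕ =>
    ENNReal.ofReal (Real.log ((codings f F Y n).ncard) / Real.log n)

/-- The circle is connected. -/
theorem circle_isConnected_univ : IsConnected (Set.univ : Set Circle) := by
  have hsurj : Function.Surjective Circle.exp := fun z => ⟨Complex.arg z, Circle.exp_arg z⟩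
  have : ConnectedSpace Circle :=
    { toPreconnectedSpace := ⟨by
        rw [← Set.image_univ_of_surjective hsurj]
        exact isPreconnected_univ.image _ Circle.exp.continuous.continuousOn⟩,
      toNonempty := ⟨1⟩ }
  exact isConnected_univ

section Aux

/-- A wandering point has a neighbourhood that every orbit visits at most once. -/
lemma wandering_nbhd {X : Type*} [TopologicalSpace X] {f : X → X} {p : X}
    (h : p ∉ nonWandering f) : ∃ V ∈ nhds p, ∀ m, 1 ≤ m → ∀ y ∈ V, f^[m] y ∉ V := by
  simp only [nonWandering, Set.mem_setOf_eq, not_forall] at h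
  obtain ⟨V, hV, hn⟩ := h
  refine ⟨V, hV, fun m hm y hy hfy => ?_⟩
  exact hn ⟨m, hm, ⟨f^[m] y, ⟨y, hy, rfl⟩, hfy⟩⟩

/-- Counting words in which each non-`none` letter appears at most once. -/
lemma card_words_le {l m : ℕ} (W : Set (Fin m → Option (Fin l)))
    (hW : ∀ w ∈ W, ∀ (j : Fin l) (s t : Fin m), w s = some j → w t = some j → s = t) :
    W.ncard ≤ (m + 1) ^ l := by
  classical
  set φ : (Fin m → Option (Fin l)) → (Fin l → Option (Fin m)) := fun w j =>
    if h : ∃ t, w t = some j then some h.choose else none with hφ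
  have key : ∀ v ∈ W, ∀ (j : Fin l) (s : Fin m), v s = some j → φ v j = some s := by
    intro v hv j s hs
    have h : ∃ t, v t = some j := ⟨s, hs⟩
    simp only [hφ, dif_pos h]
    exact congrArg some (hW v hv j _ s h.choose_spec hs)
  have key2 : ∀ v ∈ W, ∀ v', φ v = φ v' → ∀ (t : Fin m) (j : Fin l),
      v t = some j → v' t = some j := by
    intro v hv v' he t j hvt
    have h1 : φ v' j = some t := by rw [← he]; exact key v hv j t hvt
    by_cases h : ∃ s, v' s = some j
    · simp only [hφ, dif_pos h] at h1
      obtain rfl : h.choose = t := Option.some_injective _ h1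
      exact h.choose_spec
    · simp only [hφ, dif_neg h] at h1; exact absurd h1 (by simp)
  have hinj : Set.InjOn φ W := by
    intro w hw w' hw' heq
    funext t
    rcases hwt : w t with _ | j
    · rcases hw't : w' t with _ | j
      · rfl
      · have := key2 w' hw' w heq.symm t j hw't
        rw [this] at hwt; exact absurd hwt (by simp)
    · rw [key2 w hw w' heq t j hwt]
  have hWfin : W.Finite := Set.toFinite _
  calc W.ncard = (φ '' W).ncard := (Set.ncard_image_of_injOn hinj).symm
    _ ≤ (Set.univ : Set (Fin l → Option (Fin m))).ncard :=
        Set.ncard_le_ncard (Set.subset_univ _) Set.finite_univ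
    _ = (m + 1) ^ l := by
        rw [Set.ncard_univ, Nat.card_eq_fintype_card]
        simp [Fintype.card_fun]

lemma tendsto_log_succ_div_log :
    Filter.Tendsto (fun m : ℕ => Real.log (m + 1) / Real.log m) Filter.atTop (nhds 1) := by
  have ha : Filter.Tendsto (fun m : ℕ => Real.log (1 + 1 / m)) Filter.atTop (nhds 0) := by
    have h0 : Filter.Tendsto (fun m : ℕ => 1 + 1 / (m : ℝ)) Filter.atTop (nhds 1) := by
      simpa using tendsto_const_nhds.add (tendsto_one_div_atTop_nhds_zero_nat (𝕜 := ℝ))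
    have := (Real.continuousAt_log (by norm_num : (1 : ℝ) ≠ 0)).tendsto.comp h0
    simpa [Function.comp_def] using this
  have hb : Filter.Tendsto (fun m : ℕ => (Real.log m)⁻¹) Filter.atTop (nhds 0) :=
    (Real.tendsto_log_atTop.comp tendsto_natCast_atTop_atTop).inv_tendsto_atTop
  have h1 : Filter.Tendsto (fun m : ℕ => 1 + Real.log (1 + 1 / m) * (Real.log m)⁻¹)
      Filter.atTop (nhds 1) := by
    simpa using tendsto_const_nhds.add (ha.mul hb)
  refine h1.congr' ?_
  filter_upwards [Filter.eventually_ge_atTop 2] with m hm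
  have hm0 : (0 : ℝ) < m := by exact_mod_cast Nat.lt_of_lt_of_le Nat.zero_lt_two hm
  have hlog : Real.log m ≠ 0 := by
    have : (1 : ℝ) < m := by exact_mod_cast Nat.lt_of_lt_of_le Nat.one_lt_two hm
    exact ne_of_gt (Real.log_pos this)
  have hsum : Real.log ((m : ℝ) + 1) = Real.log m + Real.log (1 + 1 / m) := by
    rw [← Real.log_mul (ne_of_gt hm0) (by positivity)]
    field_simp
  rw [hsum, add_div, div_self hlog]
  ring

/-- Core bound: if every orbit visits each `F j` at most once, then relative entropy `≤ L`. -/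
lemma polEntRel_le_card {X : Type*} (f : X → X) {L : ℕ} (F : Fin L → Set X) (Y : Set X)
    (hF : ∀ (j : Fin L), ∀ y ∈ F j, ∀ m, 1 ≤ m → f^[m] y ∉ F j) :
    polEntRel f F Y ≤ (L : ℝ≥0∞) := by
  have hcard : ∀ n, (codings f F Y n).ncard ≤ (n + 1) ^ L := by
    intro n
    apply card_words_le
    rintro w ⟨x, _, hw⟩ j s t hs ht
    by_contra hne
    have hne' : (s : ℕ) ≠ (t : ℕ) := fun h => hne (Fin.ext h)
    -- wlog s < t
    have main : ∀ s t : Fin n, (s : ℕ) < (t : ℕ) → w s = some j → w t = some j → False := by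
      intro s t hlt hs ht
      have h1 : f^[(s : ℕ)] x ∈ F j := by have := hw s; rw [hs] at this; exact this
      have h2 : f^[(t : ℕ)] x ∈ F j := by have := hw t; rw [ht] at this; exact this
      have heq : f^[(t : ℕ)] x = f^[(t : ℕ) - (s : ℕ)] (f^[(s : ℕ)] x) := by
        rw [← Function.iterate_add_apply]
        congr 1
        omega
      exact hF j _ h1 ((t : ℕ) - (s : ℕ)) (by omega) (heq ▸ h2)
    rcases Nat.lt_or_ge (s : ℕ) (t : ℕ) with h | h
    · exact main s t h hs ht
    · exact main t s (by omega) ht hs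
  have hle : (fun n : ℕ => ENNReal.ofReal (Real.log ((codings f F Y n).ncard) / Real.log n))
      ≤ᶠ[Filter.atTop] fun n : ℕ => ENNReal.ofReal ((L : ℝ) * (Real.log (n + 1) / Real.log n)) := by
    filter_upwards [Filter.eventually_ge_atTop 2] with n hn
    apply ENNReal.ofReal_le_ofReal
    have hlogn : 0 < Real.log n :=
      Real.log_pos (by exact_mod_cast Nat.lt_of_lt_of_le Nat.one_lt_two hn)
    have key : Real.log ((codings f F Y n).ncard) ≤ (L : ℝ) * Real.log (n + 1) := by
      have hlog1 : 0 ≤ Real.log ((n : ℝ) + 1) := Real.log_nonneg (by exact_mod_cast Nat.le_add_left 1 n)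
      rcases Nat.eq_zero_or_pos ((codings f F Y n).ncard) with h0 | hpos
      · rw [h0]; simpa using mul_nonneg (Nat.cast_nonneg L) hlog1
      · calc Real.log ((codings f F Y n).ncard)
            ≤ Real.log (((n + 1) ^ L : ℕ) : ℝ) := by
              apply Real.log_le_log (by exact_mod_cast hpos) (by exact_mod_cast hcard n)
          _ = (L : ℝ) * Real.log (n + 1) := by
              push_cast
              rw [Real.log_pow]
    rw [← mul_div_assoc, div_le_div_iff₀ hlogn hlogn]
    exact mul_le_mul_of_nonneg_right key hlogn.le
  have hlim : Filter.Tendsto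
      (fun n : ℕ => ENNReal.ofReal ((L : ℝ) * (Real.log (n + 1) / Real.log n)))
      Filter.atTop (nhds (L : ℝ≥0∞)) := by
    have hr : Filter.Tendsto (fun n : ℕ => (L : ℝ) * (Real.log (n + 1) / Real.log n))
        Filter.atTop (nhds ((L : ℝ) * 1)) := tendsto_const_nhds.mul tendsto_log_succ_div_log
    rw [mul_one] at hr
    have := (ENNReal.continuous_ofReal.tendsto _).comp hr
    simpa [ENNReal.ofReal_natCast, Function.comp_def] using this
  calc polEntRel f F Y
      ≤ Filter.atTop.limsup
        (fun n : ℕ => ENNReal.ofReal ((L : ℝ) * (Real.log (n + 1) / Real.log n))) :=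
        Filter.limsup_le_limsup hle
    _ = (L : ℝ≥0∞) := hlim.limsup_eq

end Aux

-- STATEMENT 11
theorem stmt11 {X : Type*} [MetricSpace X] [CompactSpace X] (f : X → X) (hf : Continuous f)
    (hNW : (nonWandering f).Finite) (Y : Set X) (hY : Set.MapsTo f Y Y)
    (l : ℕ) (x : Fin l → X) (hinj : Function.Injective x)
    (hx : ∀ j, x j ∉ nonWandering f)
    (U : Fin l → ℕ → Set X)
    (hUnhds : ∀ j n, U j n ∈ nhds (x j))
    (hUanti : ∀ j, Antitone (U j))
    (hUbasis : ∀ j, ∀ V ∈ nhds (x j), ∃ n, U j n ⊆ V) :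
    Filter.atTop.limsup (fun n => polEntRel f (fun j => U j n) Y) ≤ (l : ℝ≥0∞) := by
  choose V hVnhds hVw using fun j => wandering_nbhd (hx j)
  choose N hN using fun j => hUbasis j (V j) (hVnhds j)
  refine Filter.limsup_le_of_le (by isBoundedDefault) ?_
  filter_upwards [Filter.eventually_ge_atTop (Finset.univ.sup N)] with n hn
  apply polEntRel_le_card
  intro j y hy m hm hfy
  have hsub : U j n ⊆ V j :=
    (hUanti j (le_trans (Finset.le_sup (Finset.mem_univ j)) hn)).trans (hN j)
  exact hVw j m hm y (hsub hy) (hsub hfy)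
end

section
/- Let f : [0,1] → [0,1] be a homeomorphism with NW(f) = Fix(f) = {0, 1}, and let k ≥ 1. Let Â(k) := { {x_1,…,x_k} ∈ [0,1]^{*k} : x_1 < x_2 < … < x_k } be the set of k-point subsets of [0,1] with pairwise distinct elements. Then the polynomial entropy of the induced map f^{*k} on the set Â(k) equals k, i.e. h_pol(f^{*k}; Â(k)) = k. -/
open Filter Topology TopologicalSpace Set
open scoped ENNReal

-- ===================== auxiliary development =====================
section Aux

open Metric unitInterval

theorem aux_le_dynDist_of {X : Type*} [MetricSpace X] {f : X → X} {n m : ℕ} {x y : X} {ε : ℝ}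
    (hm : m < n) (h : ε ≤ dist (f^[m] x) (f^[m] y)) : ε ≤ dynDist f n x y := by
  refine h.trans ?_
  rw [dist_nndist]
  exact_mod_cast Finset.le_sup (f := fun k => nndist (f^[k] x) (f^[k] y))
    (Finset.mem_range.mpr hm)

theorem aux_exists_of_le_dynDist {X : Type*} [MetricSpace X] {f : X → X} {n : ℕ} {x y : X} {ε : ℝ}
    (hε : 0 < ε) (h : ε ≤ dynDist f n x y) : ∃ m < n, ε ≤ dist (f^[m] x) (f^[m] y) := by
  have h' : ε.toNNReal ≤ (Finset.range n).sup fun k => nndist (f^[k] x) (f^[k] y) := by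
    exact Real.toNNReal_le_iff_le_coe.mpr h
  rw [Finset.le_sup_iff (by simpa using hε)] at h'
  obtain ⟨m, hm, hle⟩ := h'
  refine ⟨m, Finset.mem_range.mp hm, ?_⟩
  rw [dist_nndist]
  calc ε = ((ε.toNNReal : NNReal) : ℝ) := by rw [Real.coe_toNNReal _ hε.le]
    _ ≤ _ := by exact_mod_cast hle

theorem aux_dynDist_comm {X : Type*} [MetricSpace X] (f : X → X) (n : ℕ) (x y : X) :
    dynDist f n x y = dynDist f n y x := by
  unfold dynDist
  congr 1
  exact Finset.sup_congr rfl fun m _ => nndist_comm _ _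

noncomputable instance : ConditionallyCompleteLinearOrder ↥unitInterval :=
  have : Fact ((0:ℝ) ≤ 1) := ⟨zero_le_one⟩
  inferInstance

/-- the underlying set of an iterate of the induced map -/
theorem aux_inducedSym_iterate {X : Type*} [TopologicalSpace X] (f : X → X) (hf : Continuous f)
    (k : ℕ) (m : ℕ) (A : SymProd X k) :
    (((inducedSym f hf k)^[m] A).1 : Set X) = f^[m] '' (A.1 : Set X) := by
  induction m with
  | zero => simp
  | succ m ih =>
    rw [Function.iterate_succ_apply']
    show f '' (((inducedSym f hf k)^[m] A).1 : Set X) = _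
    rw [ih, Set.image_image, Function.iterate_succ']
    rfl

end Aux
section Aux2
open Metric unitInterval

namespace Pol13

noncomputable def phi (F : ↥unitInterval → ↥unitInterval) (n : ℕ) (x : ↥unitInterval) : ℝ :=
  ∑ m ∈ Finset.range n, (F^[m] x : ℝ)

theorem phi_nonneg (F : ↥unitInterval → ↥unitInterval) (n : ℕ) (x : ↥unitInterval) :
    0 ≤ phi F n x :=
  Finset.sum_nonneg fun m _ => (F^[m] x).2.1

theorem phi_le (F : ↥unitInterval → ↥unitInterval) (n : ℕ) (x : ↥unitInterval) :
    phi F n x ≤ n := by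
  calc phi F n x ≤ ∑ m ∈ Finset.range n, (1:ℝ) :=
        Finset.sum_le_sum fun m _ => (F^[m] x).2.2
    _ = n := by simp

theorem dist_iter_le_phi_aux {F : ↥unitInterval → ↥unitInterval} (hmono : Monotone F)
    {n m : ℕ} (hm : m < n) {x y : ↥unitInterval} (hxy : x ≤ y) :
    dist (F^[m] x) (F^[m] y) ≤ phi F n y - phi F n x := by
  have hxy' : ∀ j : ℕ, (F^[j] x : ℝ) ≤ (F^[j] y : ℝ) := fun j => (hmono.iterate j) hxy
  have : dist (F^[m] x) (F^[m] y) = (F^[m] y : ℝ) - (F^[m] x : ℝ) := by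
    rw [Subtype.dist_eq, Real.dist_eq, abs_sub_comm, abs_of_nonneg (by linarith [hxy' m])]
  rw [this]
  unfold phi
  rw [← Finset.sum_sub_distrib]
  exact Finset.single_le_sum (f := fun j => (F^[j] y : ℝ) - (F^[j] x : ℝ))
    (fun j _ => by linarith [hxy' j]) (Finset.mem_range.mpr hm)

theorem dist_iter_le_phi {F : ↥unitInterval → ↥unitInterval} (hmono : Monotone F)
    {n m : ℕ} (hm : m < n) (x y : ↥unitInterval) :
    dist (F^[m] x) (F^[m] y) ≤ |phi F n x - phi F n y| := by
  rcases le_total x y with h | h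
  · have h' := dist_iter_le_phi_aux hmono hm h
    have h0 : (0:ℝ) ≤ dist (F^[m] x) (F^[m] y) := dist_nonneg
    rw [abs_sub_comm, abs_of_nonneg (by linarith)]
    exact h'
  · have h' := dist_iter_le_phi_aux hmono hm h
    have h0 : (0:ℝ) ≤ dist (F^[m] y) (F^[m] x) := dist_nonneg
    rw [abs_of_nonneg (by linarith), dist_comm]
    exact h'

/-- a canonical enumeration of an element of the symmetric product -/
noncomputable def enum (k : ℕ) (A : SymProd ↥unitInterval k) (i : Fin k) : ↥unitInterval :=
  (A.2.1.toFinset.sort (· ≤ ·)).getD i 0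

theorem enum_length (k : ℕ) (A : SymProd ↥unitInterval k)
    (hA : (A.1 : Set ↥unitInterval).ncard = k) :
    (A.2.1.toFinset.sort (· ≤ ·)).length = k := by
  rw [Finset.length_sort, ← Set.ncard_eq_toFinset_card _ A.2.1]
  exact hA

theorem enum_mem (k : ℕ) (A : SymProd ↥unitInterval k)
    (hA : (A.1 : Set ↥unitInterval).ncard = k) (i : Fin k) :
    enum k A i ∈ (A.1 : Set ↥unitInterval) := by
  have hl := enum_length k A hA
  have hi : (i : ℕ) < (A.2.1.toFinset.sort (· ≤ ·)).length := by rw [hl]; exact i.2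
  have : enum k A i ∈ A.2.1.toFinset.sort (· ≤ ·) := by
    rw [enum, List.getD_eq_getElem _ _ hi]
    exact List.getElem_mem hi
  rw [Finset.mem_sort, Set.Finite.mem_toFinset] at this
  exact this

theorem enum_surj (k : ℕ) (A : SymProd ↥unitInterval k)
    (hA : (A.1 : Set ↥unitInterval).ncard = k) {x : ↥unitInterval}
    (hx : x ∈ (A.1 : Set ↥unitInterval)) : ∃ i : Fin k, enum k A i = x := by
  have hl := enum_length k A hA
  have : x ∈ A.2.1.toFinset.sort (· ≤ ·) := by
    rw [Finset.mem_sort, Set.Finite.mem_toFinset]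
    exact hx
  obtain ⟨j, hj, hx'⟩ := List.mem_iff_getElem.mp this
  refine ⟨⟨j, by rwa [hl] at hj⟩, ?_⟩
  rw [enum, List.getD_eq_getElem _ _ hj]
  exact hx'

end Pol13
end Aux2
section Aux3
open Metric unitInterval

namespace Pol13

theorem floor_eq_abs_lt {u v : ℝ} (hu : 0 ≤ u) (hv : 0 ≤ v) (h : ⌊u⌋₊ = ⌊v⌋₊) :
    |u - v| < 1 := by
  have h1 := Nat.lt_floor_add_one u
  have h2 := Nat.lt_floor_add_one v
  have h3 := Nat.floor_le hu
  have h4 := Nat.floor_le hv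
  rw [h] at h1 h3
  rw [abs_sub_lt_iff]
  constructor <;> linarith

/-- The key counting (upper bound) lemma: any `(n,ε)`-separated subset of `Â(k)` has
cardinality at most `(⌊2n/ε⌋+1)^k`. -/
theorem card_sep_le (f : ↥unitInterval ≃ₜ ↥unitInterval) (hmono : Monotone ⇑f) (k n : ℕ)
    {ε : ℝ} (hε : 0 < ε) (E : Finset (SymProd ↥unitInterval k))
    (hE : ↑E ⊆ {A : SymProd ↥unitInterval k | (A.1 : Set ↥unitInterval).ncard = k})
    (hsep : IsDynSeparated (inducedSym ⇑f f.continuous k) n ε E) :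
    E.card ≤ (⌊2 * n / ε⌋₊ + 1) ^ k := by
  classical
  set F : ↥unitInterval → ↥unitInterval := ⇑f with hF
  set B := ⌊2 * (n:ℝ) / ε⌋₊ with hBdef
  set c : SymProd ↥unitInterval k → (Fin k → ℕ) :=
    fun A i => ⌊phi F n (enum k A i) / (ε / 2)⌋₊ with hc
  have hε2 : 0 < ε / 2 := half_pos hε
  have hBnd : ∀ A i, c A i ≤ B := by
    intro A i
    apply Nat.floor_le_floor
    rw [div_le_iff₀ hε2]
    calc phi F n (enum k A i) ≤ n := phi_le F n _
      _ = 2 * (n:ℝ) / ε * (ε / 2) := by field_simp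
  have hcard : (Fintype.piFinset fun _ : Fin k => Finset.range (B + 1)).card = (B+1)^k := by
    rw [Fintype.card_piFinset]
    simp
  rw [← hcard]
  apply Finset.card_le_card_of_injOn c
  · intro A _
    rw [Finset.mem_coe, Fintype.mem_piFinset]
    intro i
    rw [Finset.mem_range]
    exact Nat.lt_succ_of_le (hBnd A i)
  · intro A hAE B' hBE hcAB
    by_contra hne
    have hsep' := hsep A (by simpa using hAE) B' (by simpa using hBE) hne
    obtain ⟨m, hm, hdist⟩ := aux_exists_of_le_dynDist hε hsep'
    have hAk : (A.1 : Set ↥unitInterval).ncard = k := hE (by simpa using hAE)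
    have hBk : (B'.1 : Set ↥unitInterval).ncard = k := hE (by simpa using hBE)
    -- pointwise bound
    have key : ∀ i : Fin k,
        dist (F^[m] (enum k A i)) (F^[m] (enum k B' i)) ≤ ε / 2 := by
      intro i
      have h1 := dist_iter_le_phi hmono hm (enum k A i) (enum k B' i)
      have hfl : ⌊phi F n (enum k A i) / (ε / 2)⌋₊ = ⌊phi F n (enum k B' i) / (ε / 2)⌋₊ :=
        congrFun hcAB i
      have habs := floor_eq_abs_lt (div_nonneg (phi_nonneg F n _) hε2.le)
        (div_nonneg (phi_nonneg F n _) hε2.le) hfl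
      have : |phi F n (enum k A i) - phi F n (enum k B' i)| ≤ ε / 2 := by
        rw [div_sub_div_same] at habs
        rw [abs_div, abs_of_pos hε2, div_lt_one hε2] at habs
        exact habs.le
      linarith
    -- Hausdorff bound
    have hH : dist ((inducedSym ⇑f f.continuous k)^[m] A)
        ((inducedSym ⇑f f.continuous k)^[m] B') ≤ ε / 2 := by
      rw [Subtype.dist_eq, Metric.NonemptyCompacts.dist_eq,
        aux_inducedSym_iterate, aux_inducedSym_iterate]
      apply hausdorffDist_le_of_mem_dist hε2.le
      · rintro x ⟨a, ha, rfl⟩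
        obtain ⟨i, rfl⟩ := enum_surj k A hAk ha
        exact ⟨F^[m] (enum k B' i), Set.mem_image_of_mem _ (enum_mem k B' hBk i), key i⟩
      · rintro x ⟨b, hb, rfl⟩
        obtain ⟨i, rfl⟩ := enum_surj k B' hBk hb
        exact ⟨F^[m] (enum k A i), Set.mem_image_of_mem _ (enum_mem k A hAk i),
          by rw [dist_comm]; exact key i⟩
    linarith
end Pol13
end Aux3
section Aux4
open Metric unitInterval

namespace Pol13

variable (f : ↥unitInterval ≃ₜ ↥unitInterval)

/-- the two-sided orbit of a point. -/
noncomputable def orb (a : ↥unitInterval) (j : ℤ) : ↥unitInterval :=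
  if 0 ≤ j then (⇑f)^[j.toNat] a else (⇑f.symm)^[(-j).toNat] a

theorem orb_zero (a : ↥unitInterval) : orb f a 0 = a := by simp [orb]

theorem orb_succ (a : ↥unitInterval) (j : ℤ) : orb f a (j + 1) = f (orb f a j) := by
  rcases le_or_gt 0 j with hj | hj
  · have hj1 : (0:ℤ) ≤ j + 1 := by omega
    rw [orb, orb, if_pos hj1, if_pos hj]
    have : (j + 1).toNat = j.toNat + 1 := by omega
    rw [this, Function.iterate_succ_apply']
  · rcases eq_or_lt_of_le (by omega : j + 1 ≤ 0) with h0 | hneg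
    · have hj' : j = -1 := by omega
      subst hj'
      simp [orb]
    · rw [orb, orb, if_neg (by omega), if_neg (by omega)]
      have : (-j).toNat = (-(j+1)).toNat + 1 := by omega
      rw [this, Function.iterate_succ_apply']
      simp

theorem orb_iterate (a : ↥unitInterval) (m : ℕ) (j : ℤ) :
    (⇑f)^[m] (orb f a j) = orb f a (j + m) := by
  induction m with
  | zero => simp
  | succ m ih =>
    rw [Function.iterate_succ_apply', ih]
    have : j + (m + 1 : ℕ) = (j + m) + 1 := by push_cast; ring
    rw [this, orb_succ]

theorem orb_mono_or_anti (hm : StrictMono ⇑f) {a : ↥unitInterval} (ha : f a ≠ a) :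
    StrictMono (orb f a) ∨ StrictAnti (orb f a) := by
  have istep : ∀ j : ℤ, (orb f a (j+1) < orb f a (j+1+1)) ↔ (orb f a j < orb f a (j+1)) := by
    intro j
    rw [orb_succ f a (j+1), orb_succ f a j]
    exact hm.lt_iff_lt
  have istep' : ∀ j : ℤ, (orb f a (j+1+1) < orb f a (j+1)) ↔ (orb f a (j+1) < orb f a j) := by
    intro j
    rw [orb_succ f a (j+1), orb_succ f a j]
    exact hm.lt_iff_lt
  have key : ∀ j : ℤ, (orb f a j < orb f a (j+1)) ↔ (a < f a) := by
    intro j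
    induction j using Int.induction_on with
    | zero => rw [orb_succ, orb_zero]
    | succ i ih => rw [istep i]; exact ih
    | pred i ih =>
      have h2 := istep (-(i:ℤ)-1)
      have e : (-(i:ℤ)-1+1) = -(i:ℤ) := by ring
      rw [e] at h2
      rw [e]
      exact h2.symm.trans ih
  have key' : ∀ j : ℤ, (orb f a (j+1) < orb f a j) ↔ (f a < a) := by
    intro j
    induction j using Int.induction_on with
    | zero => rw [orb_succ, orb_zero]
    | succ i ih => rw [istep' i]; exact ih
    | pred i ih =>
      have h2 := istep' (-(i:ℤ)-1)
      have e : (-(i:ℤ)-1+1) = -(i:ℤ) := by ring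
      rw [e] at h2
      rw [e]
      exact h2.symm.trans ih
  rcases lt_or_gt_of_ne ha with h | h
  · right
    exact strictAnti_int_of_succ_lt fun j => (key' j).mpr h
  · left
    exact strictMono_int_of_lt_succ fun j => (key j).mpr h

/-- distance on a strictly monotone real sequence is bounded below away from a point -/
theorem real_seq_sep {z : ℤ → ℝ} (hz : StrictMono z) (r : ℤ) (hr : r ≠ 0) :
    min (|z 0 - z 1|) (|z 0 - z (-1)|) ≤ |z 0 - z r| := by
  rcases lt_or_gt_of_ne hr with h | h
  · have h1 : z r ≤ z (-1) := hz.monotone (by omega)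
    have h2 : z (-1) < z 0 := hz (by omega)
    calc min (|z 0 - z 1|) (|z 0 - z (-1)|) ≤ |z 0 - z (-1)| := min_le_right _ _
      _ ≤ |z 0 - z r| := by rw [abs_of_nonneg (by linarith), abs_of_nonneg (by linarith)]
                            linarith
  · have h1 : z 1 ≤ z r := hz.monotone (by omega)
    have h2 : z 0 < z 1 := hz (by omega)
    calc min (|z 0 - z 1|) (|z 0 - z (-1)|) ≤ |z 0 - z 1| := min_le_left _ _
      _ ≤ |z 0 - z r| := by rw [abs_of_nonpos (by linarith), abs_of_nonpos (by linarith)]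
                            linarith

theorem real_seq_sep' {z : ℤ → ℝ} (hz : StrictAnti z) (r : ℤ) (hr : r ≠ 0) :
    min (|z 0 - z 1|) (|z 0 - z (-1)|) ≤ |z 0 - z r| := by
  rcases lt_or_gt_of_ne hr with h | h
  · have h1 : z (-1) ≤ z r := hz.antitone (by omega)
    have h2 : z 0 < z (-1) := hz (by omega)
    calc min (|z 0 - z 1|) (|z 0 - z (-1)|) ≤ |z 0 - z (-1)| := min_le_right _ _
      _ ≤ |z 0 - z r| := by rw [abs_of_nonpos (by linarith), abs_of_nonpos (by linarith)]
                            linarith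
  · have h1 : z r ≤ z 1 := hz.antitone (by omega)
    have h2 : z 1 < z 0 := hz (by omega)
    calc min (|z 0 - z 1|) (|z 0 - z (-1)|) ≤ |z 0 - z 1| := min_le_left _ _
      _ ≤ |z 0 - z r| := by rw [abs_of_nonneg (by linarith), abs_of_nonneg (by linarith)]
                            linarith

theorem orb_sep (hm : StrictMono ⇑f) {a : ↥unitInterval} (ha : f a ≠ a) :
    ∃ ε₀ > 0, ∀ r : ℤ, r ≠ 0 → ε₀ ≤ dist (orb f a 0) (orb f a r) := by
  set z : ℤ → ℝ := fun j => (orb f a j : ℝ) with hzdef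
  have hdist : ∀ r : ℤ, dist (orb f a 0) (orb f a r) = |z 0 - z r| := fun r => by
    rw [Subtype.dist_eq, Real.dist_eq]
  have hmain : ∀ r : ℤ, r ≠ 0 → min (|z 0 - z 1|) (|z 0 - z (-1)|) ≤ |z 0 - z r| := by
    rcases orb_mono_or_anti f hm ha with hyy | hyy
    · exact real_seq_sep (fun u v huv => Subtype.coe_lt_coe.mpr (hyy huv))
    · exact real_seq_sep' (fun u v huv => Subtype.coe_lt_coe.mpr (hyy huv))
  have hinj : Function.Injective (orb f a) := by
    rcases orb_mono_or_anti f hm ha with hyy | hyy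
    exacts [hyy.injective, hyy.injective]
  refine ⟨min (|z 0 - z 1|) (|z 0 - z (-1)|), ?_, fun r hr => (hdist r) ▸ hmain r hr⟩
  apply lt_min <;> rw [abs_pos, sub_ne_zero]
  · intro h
    have : (0:ℤ) = 1 := hinj (Subtype.ext h)
    omega
  · intro h
    have : (0:ℤ) = -1 := hinj (Subtype.ext h)
    omega

end Pol13
end Aux4
section Aux5
open Metric unitInterval

namespace Pol13

theorem idx_arith {k m : ℕ} (hm : 0 < m) {i j : Fin k} {u v : ℕ} (hu : u < m) (hv : v < m)
    (h : (i:ℕ) * m + u = (j:ℕ) * m + v) : i = j ∧ u = v := by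
  have hij : (i:ℕ) = (j:ℕ) := by
    have h1 : ((i:ℕ) * m + u) / m = (i:ℕ) := by
      rw [mul_comm, Nat.mul_add_div hm, Nat.div_eq_of_lt hu, Nat.add_zero]
    have h2 : ((j:ℕ) * m + v) / m = (j:ℕ) := by
      rw [mul_comm, Nat.mul_add_div hm, Nat.div_eq_of_lt hv, Nat.add_zero]
    rw [← h1, ← h2, h]
  refine ⟨Fin.ext hij, ?_⟩
  rw [hij] at h
  omega

theorem sep_family (f : ↥unitInterval ≃ₜ ↥unitInterval) (hm : StrictMono ⇑f)
    {a : ↥unitInterval} (ha : f a ≠ a) {ε₀ : ℝ}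
    (hsep₀ : ∀ r : ℤ, r ≠ 0 → ε₀ ≤ dist (orb f a 0) (orb f a r))
    (k n : ℕ) (hk : 1 ≤ k) (hn : k ≤ n) :
    ∃ E : Finset (SymProd ↥unitInterval k),
      ↑E ⊆ {A : SymProd ↥unitInterval k | (A.1 : Set ↥unitInterval).ncard = k} ∧
      E.card = (n / k) ^ k ∧ IsDynSeparated (inducedSym ⇑f f.continuous k) n ε₀ E := by
  classical
  haveI : Nonempty (Fin k) := ⟨⟨0, hk⟩⟩
  set m := n / k with hmdef
  have hm1 : 1 ≤ m := (Nat.one_le_div_iff (by omega)).mpr hn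
  have hinj : Function.Injective (orb f a) := by
    rcases orb_mono_or_anti f hm ha with hyy | hyy
    exacts [hyy.injective, hyy.injective]
  set g : (Fin k → ℕ) → Fin k → ↥unitInterval :=
    fun r i => orb f a (-(((i:ℕ) * m + r i : ℕ) : ℤ)) with hgdef
  have hgcompat : ∀ r r' : (Fin k → ℕ), (∀ i, r i < m) → (∀ i, r' i < m) →
      ∀ i j, g r i = g r' j → i = j ∧ r i = r' j := by
    intro r r' hr hr' i j hij
    have := hinj hij
    have h2 : (i:ℕ) * m + r i = (j:ℕ) * m + r' j := by omega
    exact idx_arith hm1 (hr i) (hr' j) h2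
  set AS : (Fin k → ℕ) → SymProd ↥unitInterval k := fun r =>
    ⟨⟨⟨Set.range (g r), (Set.finite_range _).isCompact⟩, Set.range_nonempty _⟩,
      Set.finite_range _, by
        show (Set.range (g r)).ncard ≤ k
        rw [← Set.image_univ]
        refine le_trans (Set.ncard_image_le Set.finite_univ) ?_
        rw [Set.ncard_univ]
        simp⟩ with hASdef
  have hAScoe : ∀ r, ((AS r).1 : Set ↥unitInterval) = Set.range (g r) := fun r => rfl
  have hASk : ∀ r : Fin k → ℕ, (∀ i, r i < m) →
      ((AS r).1 : Set ↥unitInterval).ncard = k := by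
    intro r hr
    rw [hAScoe, ← Set.image_univ,
      Set.ncard_image_of_injOn (fun i _ j _ hij => (hgcompat r r hr hr i j hij).1),
      Set.ncard_univ]
    simp
  refine ⟨Finset.image AS (Fintype.piFinset fun _ : Fin k => Finset.range m), ?_, ?_, ?_⟩
  · intro A hA
    rw [Finset.coe_image] at hA
    obtain ⟨r, hr, rfl⟩ := hA
    rw [Finset.mem_coe, Fintype.mem_piFinset] at hr
    exact hASk r fun i => Finset.mem_range.mp (hr i)
  · rw [Finset.card_image_of_injOn, Fintype.card_piFinset]
    · simp
    · intro r hr r' hr' hrr'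
      rw [Finset.mem_coe, Fintype.mem_piFinset] at hr hr'
      have hsets : Set.range (g r) = Set.range (g r') := by
        have := congrArg (fun A : SymProd ↥unitInterval k => (A.1 : Set ↥unitInterval)) hrr'
        simpa [hAScoe] using this
      funext i
      obtain ⟨j, hj⟩ : g r i ∈ Set.range (g r') := hsets ▸ Set.mem_range_self i
      obtain ⟨hij, hri⟩ := hgcompat r' r (fun i => Finset.mem_range.mp (hr' i))
        (fun i => Finset.mem_range.mp (hr i)) j i hj
      rw [← hri, hij]
  · intro A hA B hB hne
    rw [Finset.mem_image] at hA hB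
    obtain ⟨r, hrmem, rfl⟩ := hA
    obtain ⟨r', hr'mem, rfl⟩ := hB
    rw [Fintype.mem_piFinset] at hrmem hr'mem
    have hr : ∀ i, r i < m := fun i => Finset.mem_range.mp (hrmem i)
    have hr' : ∀ i, r' i < m := fun i => Finset.mem_range.mp (hr'mem i)
    have hrne : r ≠ r' := fun h => hne (by rw [h])
    obtain ⟨i, hi⟩ := Function.ne_iff.mp hrne
    set v : ℕ := (i:ℕ) * m + r i with hvdef
    have hv : v < n := by
      have h1 : v < ((i:ℕ) + 1) * m := by
        have h := hr i
        calc v = (i:ℕ) * m + r i := hvdef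
          _ < (i:ℕ) * m + m := by omega
          _ = ((i:ℕ) + 1) * m := by ring
      have h2 : ((i:ℕ) + 1) * m ≤ k * m := by
        have : (i:ℕ) + 1 ≤ k := i.2
        exact Nat.mul_le_mul_right m this
      have h3 : k * m ≤ n := by
        rw [hmdef, mul_comm]
        exact Nat.div_mul_le_self n k
      omega
    apply aux_le_dynDist_of hv
    -- the iterated sets
    have hset : ∀ r'' : Fin k → ℕ,
        (((inducedSym ⇑f f.continuous k)^[v] (AS r'')).1 : Set ↥unitInterval) =
          Set.range fun j : Fin k => orb f a (-(((j:ℕ) * m + r'' j : ℕ) : ℤ) + v) := by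
      intro r''
      rw [aux_inducedSym_iterate, hAScoe, ← Set.range_comp]
      refine congrArg Set.range (funext fun j => ?_)
      exact orb_iterate f a v _
    rw [Subtype.dist_eq, Metric.NonemptyCompacts.dist_eq, hset r, hset r']
    -- key separation
    have hmem0 : orb f a 0 ∈ Set.range fun j : Fin k =>
        orb f a (-(((j:ℕ) * m + r j : ℕ) : ℤ) + v) := by
      refine ⟨i, ?_⟩
      show orb f a _ = orb f a 0
      congr 1
      push_cast
      omega
    have hne0 : ∀ j : Fin k, (-(((j:ℕ) * m + r' j : ℕ) : ℤ) + v) ≠ 0 := by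
      intro j h0
      have hnat : (j:ℕ) * m + r' j = v := by omega
      obtain ⟨hji, hrj⟩ := idx_arith hm1 (hr' j) (hr i) (hnat.trans hvdef)
      have : r' i = r i := ((congrArg r' hji).symm.trans hrj)
      exact hi this.symm
    have hRnonempty : (Set.range fun j : Fin k =>
        orb f a (-(((j:ℕ) * m + r' j : ℕ) : ℤ) + v)).Nonempty := Set.range_nonempty _
    have hinf : ε₀ ≤ infDist (orb f a 0) (Set.range fun j : Fin k =>
        orb f a (-(((j:ℕ) * m + r' j : ℕ) : ℤ) + v)) := by
      rw [Metric.infDist_eq_iInf]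
      haveI := hRnonempty.to_subtype
      apply le_ciInf
      rintro ⟨x, j, rfl⟩
      exact hsep₀ _ (hne0 j)
    refine hinf.trans ?_
    apply infDist_le_hausdorffDist_of_mem hmem0
    apply hausdorffEdist_ne_top_of_nonempty_of_bounded (Set.range_nonempty _) hRnonempty
    · exact (Set.finite_range _).isBounded
    · exact (Set.finite_range _).isBounded

end Pol13
end Aux5
section Aux6
open Metric unitInterval Filter

namespace Pol13

theorem maxSep_le (f : ↥unitInterval ≃ₜ ↥unitInterval) (hmono : Monotone ⇑f) (k n : ℕ)
    {ε : ℝ} (hε : 0 < ε) :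
    maxSep (inducedSym ⇑f f.continuous k)
      {A : SymProd ↥unitInterval k | (A.1 : Set ↥unitInterval).ncard = k} n ε ≤
      (⌊2 * n / ε⌋₊ + 1) ^ k := by
  apply csSup_le
  · exact ⟨0, ∅, by simp, by simp, fun x hx => by simp at hx⟩
  · rintro m ⟨E, hE, rfl, hsep⟩
    exact card_sep_le f hmono k n hε E hE hsep

theorem le_maxSep (f : ↥unitInterval ≃ₜ ↥unitInterval) (hm : StrictMono ⇑f)
    {a : ↥unitInterval} (ha : f a ≠ a) {ε₀ : ℝ} (hε₀ : 0 < ε₀)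
    (hsep₀ : ∀ r : ℤ, r ≠ 0 → ε₀ ≤ dist (orb f a 0) (orb f a r))
    (k n : ℕ) (hk : 1 ≤ k) (hn : k ≤ n) :
    (n / k) ^ k ≤ maxSep (inducedSym ⇑f f.continuous k)
      {A : SymProd ↥unitInterval k | (A.1 : Set ↥unitInterval).ncard = k} n ε₀ := by
  obtain ⟨E, hE, hcard, hsep⟩ := sep_family f hm ha hsep₀ k n hk hn
  apply le_csSup
  · exact ⟨(⌊2 * n / ε₀⌋₊ + 1) ^ k, by
      rintro m ⟨E', hE', rfl, hsep'⟩
      exact card_sep_le f hm.monotone k n hε₀ E' hE' hsep'⟩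
  · exact ⟨E, hE, hcard, hsep⟩

theorem limsup_le_k (f : ↥unitInterval ≃ₜ ↥unitInterval) (hmono : Monotone ⇑f) (k : ℕ)
    {ε : ℝ} (hε : 0 < ε) :
    (Filter.atTop.limsup fun n : ℕ =>
      ENNReal.ofReal (Real.log (maxSep (inducedSym ⇑f f.continuous k)
        {A : SymProd ↥unitInterval k | (A.1 : Set ↥unitInterval).ncard = k} n ε) /
          Real.log n)) ≤ (k : ℝ≥0∞) := by
  have hlog : Tendsto (fun n : ℕ => Real.log n) atTop atTop :=
    Real.tendsto_log_atTop.comp tendsto_natCast_atTop_atTop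
  set C : ℝ := 2 / ε + 1 with hC
  have hC1 : (1:ℝ) ≤ C := by
    rw [hC]
    have : 0 < 2 / ε := by positivity
    linarith
  apply ENNReal.le_of_forall_pos_le_add
  intro δ hδ _
  have hδ' : (0:ℝ) < δ := hδ
  have : (k : ℝ≥0∞) + δ = ENNReal.ofReal ((k:ℝ) + δ) := by
    rw [ENNReal.ofReal_add (by positivity) hδ'.le, ENNReal.ofReal_natCast,
      ENNReal.ofReal_coe_nnreal]
  rw [this]
  refine Filter.limsup_le_of_le (by isBoundedDefault) ?_
  filter_upwards [hlog.eventually_ge_atTop ((k * Real.log C) / δ), eventually_ge_atTop 1]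
    with n hn hn1
  apply ENNReal.ofReal_le_ofReal
  set Sn : ℕ := maxSep (inducedSym ⇑f f.continuous k)
    {A : SymProd ↥unitInterval k | (A.1 : Set ↥unitInterval).ncard = k} n ε with hSn
  rcases eq_or_lt_of_le (Real.log_natCast_nonneg n) with h0 | h0
  · rw [← h0, div_zero]
    positivity
  · rw [div_le_iff₀ h0]
    set B : ℕ := ⌊2 * (n:ℝ) / ε⌋₊ with hB
    have hSnM : Sn ≤ (B + 1) ^ k := maxSep_le f hmono k n hε
    have hBn : ((B:ℝ) + 1) ≤ C * n := by
      have h1 : (B:ℝ) ≤ 2 * n / ε := Nat.floor_le (by positivity)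
      have h2 : (1:ℝ) ≤ n := by exact_mod_cast hn1
      have : 2 * (n:ℝ) / ε = (2/ε) * n := by ring
      rw [hC]
      nlinarith
    have hlogSn : Real.log Sn ≤ k * (Real.log C + Real.log n) := by
      have hM1 : (1:ℝ) ≤ ((B+1)^k : ℕ) := by exact_mod_cast Nat.one_le_pow _ _ (by omega)
      have step1 : Real.log Sn ≤ Real.log ((B+1)^k : ℕ) := by
        rcases Nat.eq_zero_or_pos Sn with h | h
        · rw [h]
          simpa using Real.log_nonneg hM1
        · exact Real.log_le_log (by exact_mod_cast h) (by exact_mod_cast hSnM)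
      refine step1.trans ?_
      have : ((B+1)^k : ℕ) = (((B:ℝ)+1))^k := by push_cast; ring
      rw [this, Real.log_pow]
      have hlB : Real.log ((B:ℝ)+1) ≤ Real.log (C * n) :=
        Real.log_le_log (by positivity) hBn
      have hCn : Real.log (C * n) = Real.log C + Real.log n := by
        apply Real.log_mul (by positivity)
        have : (1:ℝ) ≤ n := by exact_mod_cast hn1
        positivity
      calc (k:ℝ) * Real.log ((B:ℝ)+1) ≤ k * (Real.log C + Real.log n) := by
            rw [← hCn]
            exact mul_le_mul_of_nonneg_left hlB (by positivity)
        _ = _ := rfl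
    have hδlog : (k:ℝ) * Real.log C ≤ δ * Real.log n := by
      rw [div_le_iff₀ hδ'] at hn
      linarith
    calc Real.log Sn ≤ k * (Real.log C + Real.log n) := hlogSn
      _ = k * Real.log C + k * Real.log n := by ring
      _ ≤ δ * Real.log n + k * Real.log n := by linarith
      _ = ((k:ℝ) + δ) * Real.log n := by ring

theorem k_le_limsup (f : ↥unitInterval ≃ₜ ↥unitInterval) (hm : StrictMono ⇑f)
    {a : ↥unitInterval} (ha : f a ≠ a) {ε₀ : ℝ} (hε₀ : 0 < ε₀)
    (hsep₀ : ∀ r : ℤ, r ≠ 0 → ε₀ ≤ dist (orb f a 0) (orb f a r))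
    (k : ℕ) (hk : 1 ≤ k) :
    (k : ℝ≥0∞) ≤ Filter.atTop.limsup fun n : ℕ =>
      ENNReal.ofReal (Real.log (maxSep (inducedSym ⇑f f.continuous k)
        {A : SymProd ↥unitInterval k | (A.1 : Set ↥unitInterval).ncard = k} n ε₀) /
          Real.log n) := by
  have hlog : Tendsto (fun n : ℕ => Real.log n) atTop atTop :=
    Real.tendsto_log_atTop.comp tendsto_natCast_atTop_atTop
  apply ENNReal.le_of_forall_nnreal_lt
  intro c hc
  have hck : (c:ℝ) < k := by exact_mod_cast hc
  set δ : ℝ := k - c with hδdef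
  have hδ : 0 < δ := by rw [hδdef]; linarith
  refine Filter.le_limsup_of_frequently_le ?_ (by isBoundedDefault)
  apply Filter.Eventually.frequently
  filter_upwards [hlog.eventually_ge_atTop ((k * Real.log (2*k)) / δ),
    eventually_ge_atTop (2*k), hlog.eventually_gt_atTop 0] with n hn hn2k hlogn
  have hkpos : 0 < k := hk
  have hnk : k ≤ n := by omega
  set q : ℕ := n / k with hq
  have hq1 : 1 ≤ q := (Nat.one_le_div_iff (by omega)).mpr hnk
  have hSn : (q:ℕ) ^ k ≤ maxSep (inducedSym ⇑f f.continuous k)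
      {A : SymProd ↥unitInterval k | (A.1 : Set ↥unitInterval).ncard = k} n ε₀ :=
    le_maxSep f hm ha hε₀ hsep₀ k n hk hnk
  set Sn : ℕ := maxSep (inducedSym ⇑f f.continuous k)
    {A : SymProd ↥unitInterval k | (A.1 : Set ↥unitInterval).ncard = k} n ε₀ with hSndef
  -- q ≥ n / (2k) as reals
  have h2kq : n ≤ 2 * k * q := by
    have h1 : k * q + n % k = n := by rw [hq]; exact Nat.div_add_mod n k
    have h2 : n % k < k := Nat.mod_lt _ (by omega)
    have h4 : k ≤ k * q := Nat.le_mul_of_pos_right k (by omega)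
    have h3 : n ≤ 2 * (k * q) := by omega
    calc n ≤ 2 * (k * q) := h3
      _ = 2 * k * q := by ring
  have hqreal : (n:ℝ) / (2*k) ≤ (q:ℝ) := by
    rw [div_le_iff₀ (by positivity)]
    calc (n:ℝ) ≤ (2*k*q : ℕ) := by exact_mod_cast h2kq
      _ = (q:ℝ) * (2*k) := by push_cast; ring
  have hk' : (1:ℝ) ≤ (k:ℝ) := by exact_mod_cast hk
  have h2kpos : (0:ℝ) < 2*k := by linarith
  have hn1 : (2*k:ℝ) ≤ (n:ℝ) := by exact_mod_cast hn2k
  have hnpos : (0:ℝ) < n := by linarith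
  have hlogq : Real.log n - Real.log (2*k) ≤ Real.log q := by
    have h1 : Real.log ((n:ℝ)/(2*k)) ≤ Real.log q := by
      apply Real.log_le_log ?_ hqreal
      exact div_pos hnpos h2kpos
    rwa [Real.log_div (ne_of_gt hnpos) (ne_of_gt h2kpos)] at h1
  have hlogSn : (k:ℝ) * Real.log q ≤ Real.log Sn := by
    have h1 : Real.log ((q:ℝ)^k) ≤ Real.log Sn := by
      apply Real.log_le_log (by positivity)
      calc ((q:ℝ))^k = ((q^k : ℕ) : ℝ) := by push_cast; ring
        _ ≤ Sn := by exact_mod_cast hSn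
    rwa [Real.log_pow] at h1
  have hfinal : (c:ℝ) ≤ Real.log Sn / Real.log n := by
    rw [le_div_iff₀ hlogn]
    have hstep : (k:ℝ) * Real.log (2*k) ≤ δ * Real.log n := by
      rw [div_le_iff₀ hδ] at hn
      linarith
    have : (c:ℝ) * Real.log n = k * Real.log n - δ * Real.log n := by
      rw [hδdef]; ring
    rw [this]
    calc (k:ℝ) * Real.log n - δ * Real.log n
        ≤ k * Real.log n - k * Real.log (2*k) := by linarith
      _ = k * (Real.log n - Real.log (2*k)) := by ring
      _ ≤ k * Real.log q := mul_le_mul_of_nonneg_left hlogq (by positivity)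
      _ ≤ Real.log Sn := hlogSn
  calc (c : ℝ≥0∞) = ENNReal.ofReal (c:ℝ) := (ENNReal.ofReal_coe_nnreal).symm
    _ ≤ _ := ENNReal.ofReal_le_ofReal hfinal

end Pol13
end Aux6
-- STATEMENT 13
theorem stmt13 (f : ↥unitInterval ≃ₜ ↥unitInterval)
    (hfix : nonWandering ⇑f = Function.fixedPoints ⇑f)
    (h01 : Function.fixedPoints ⇑f = {0, 1}) (k : ℕ) (hk : 1 ≤ k) :
    polEnt (inducedSym ⇑f f.continuous k)
      {A : SymProd ↥unitInterval k | (A.1 : Set ↥unitInterval).ncard = k} = (k : ℝ≥0∞) := by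
  have hf0 : f 0 = 0 := by
    have h : (0 : ↥unitInterval) ∈ Function.fixedPoints ⇑f := by
      rw [h01]; exact Set.mem_insert _ _
    exact h
  have hf1 : f 1 = 1 := by
    have h : (1 : ↥unitInterval) ∈ Function.fixedPoints ⇑f := by
      rw [h01]; exact Set.mem_insert_of_mem _ rfl
    exact h
  have hmono : StrictMono ⇑f := by
    have h := Continuous.strictMono_of_inj_boundedOrder (α := ↥unitInterval)
      (δ := ↥unitInterval) (f := ⇑f) f.continuous ?_ f.injective
    · exact fun a b hab => h hab
    · show f ⊥ ≤ f ⊤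
      have hb : (⊥ : ↥unitInterval) = 0 := rfl
      have ht : (⊤ : ↥unitInterval) = 1 := rfl
      rw [hb, ht, hf0, hf1]
      exact bot_le
  have hhalf : (1/2 : ℝ) ∈ unitInterval := by constructor <;> norm_num
  set a : ↥unitInterval := ⟨1/2, hhalf⟩ with hadef
  have ha : f a ≠ a := by
    intro h
    have hmem : a ∈ ({0, 1} : Set ↥unitInterval) := by
      rw [← h01]; exact h
    simp only [Set.mem_insert_iff, Set.mem_singleton_iff] at hmem
    rcases hmem with h' | h'
    · have h2 : (a : ℝ) = ((0 : ↥unitInterval) : ℝ) := congrArg Subtype.val h'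
      rw [hadef] at h2
      have h3 : ((0 : ↥unitInterval) : ℝ) = 0 := rfl
      rw [h3] at h2
      norm_num at h2
    · have h2 : (a : ℝ) = ((1 : ↥unitInterval) : ℝ) := congrArg Subtype.val h'
      rw [hadef] at h2
      have h3 : ((1 : ↥unitInterval) : ℝ) = 1 := rfl
      rw [h3] at h2
      norm_num at h2
  obtain ⟨ε₀, hε₀, hsep₀⟩ := Pol13.orb_sep f hmono ha
  apply le_antisymm
  · apply iSup₂_le
    intro ε hε
    exact Pol13.limsup_le_k f hmono.monotone k hε
  · exact le_iSup₂_of_le ε₀ hε₀ (Pol13.k_le_limsup f hmono ha hε₀ hsep₀ k hk)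
end

section
/- For every homeomorphism f : [0,1] → [0,1], the polynomial entropy of the induced map on the hyperspace of subcontinua satisfies h_pol(C(f)) = 2 · h_pol(f). -/
open Filter Topology TopologicalSpace Set
open scoped ENNReal

section HD
open Metric

lemma my_le_infDist {α : Type*} [MetricSpace α] {x : α} {r : ℝ} {s : Set α} (hs : s.Nonempty)
    (h : ∀ y ∈ s, r ≤ dist x y) : r ≤ infDist x s := by
  have : Nonempty ↥s := hs.to_subtype
  rw [infDist_eq_iInf]; exact le_ciInf fun y => h y y.2

-- Hausdorff distance between real intervals
lemma aux_exists_close {a b c d : ℝ} (hab : a ≤ b) (hcd : c ≤ d) :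
    ∀ x ∈ Icc a b, ∃ y ∈ Icc c d, dist x y ≤ max |a - c| |b - d| := by
  intro x hx
  rcases le_total x c with h | h
  · refine ⟨c, left_mem_Icc.2 hcd, ?_⟩
    rw [Real.dist_eq, abs_of_nonpos (by linarith)]
    have : c - x ≤ c - a := by linarith [hx.1]
    calc -(x - c) = c - x := by ring
      _ ≤ |a - c| := by rw [abs_sub_comm]; exact this.trans (le_abs_self _)
      _ ≤ _ := le_max_left _ _
  · rcases le_total x d with h2 | h2
    · exact ⟨x, ⟨h, h2⟩, by simp [dist_self]⟩
    · refine ⟨d, right_mem_Icc.2 hcd, ?_⟩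
      rw [Real.dist_eq, abs_of_nonneg (by linarith)]
      have : x - d ≤ b - d := by linarith [hx.2]
      calc x - d ≤ b - d := this
        _ ≤ |b - d| := le_abs_self _
        _ ≤ _ := le_max_right _ _

lemma hausdorffDist_Icc_real {a b c d : ℝ} (hab : a ≤ b) (hcd : c ≤ d) :
    hausdorffDist (Icc a b) (Icc c d) = max |a - c| |b - d| := by
  have fin : EMetric.hausdorffEdist (Icc a b) (Icc c d) ≠ ⊤ :=
    hausdorffEdist_ne_top_of_nonempty_of_bounded (nonempty_Icc.2 hab) (nonempty_Icc.2 hcd)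
      (isBounded_Icc _ _) (isBounded_Icc _ _)
  apply le_antisymm
  · apply hausdorffDist_le_of_mem_dist (le_max_iff.2 (Or.inl (abs_nonneg _)))
      (aux_exists_close hab hcd)
    intro y hy
    obtain ⟨x, hx, hxy⟩ := aux_exists_close hcd hab y hy
    refine ⟨x, hx, ?_⟩
    rw [abs_sub_comm a c, abs_sub_comm b d]
    exact hxy
  · apply max_le
    · rcases le_total a c with h | h
      · have h1 : infDist a (Icc c d) ≤ hausdorffDist (Icc a b) (Icc c d) :=
          infDist_le_hausdorffDist_of_mem (left_mem_Icc.2 hab) fin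
        refine le_trans ?_ h1
        apply my_le_infDist (nonempty_Icc.2 hcd)
        intro y hy
        rw [Real.dist_eq, abs_sub_comm a c, abs_of_nonneg (by linarith)]
        have := hy.1
        calc c - a ≤ y - a := by linarith
          _ ≤ |a - y| := by rw [abs_sub_comm]; exact le_abs_self _
      · have h1 : infDist c (Icc a b) ≤ hausdorffDist (Icc c d) (Icc a b) :=
          infDist_le_hausdorffDist_of_mem (left_mem_Icc.2 hcd) (by rw [EMetric.hausdorffEdist_comm]; exact fin)
        rw [hausdorffDist_comm] at h1
        refine le_trans ?_ h1
        apply my_le_infDist (nonempty_Icc.2 hab)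
        intro y hy
        rw [abs_of_nonneg (by linarith)]
        have := hy.1
        calc a - c ≤ y - c := by linarith
          _ ≤ |c - y| := by rw [abs_sub_comm]; exact le_abs_self _
    · rcases le_total d b with h | h
      · have h1 : infDist b (Icc c d) ≤ hausdorffDist (Icc a b) (Icc c d) :=
          infDist_le_hausdorffDist_of_mem (right_mem_Icc.2 hab) fin
        refine le_trans ?_ h1
        apply my_le_infDist (nonempty_Icc.2 hcd)
        intro y hy
        rw [abs_of_nonneg (by linarith [hy.2])]
        have := hy.2
        calc b - d ≤ b - y := by linarith
          _ ≤ |b - y| := le_abs_self _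
          _ = dist b y := (Real.dist_eq b y).symm
      · have h1 : infDist d (Icc a b) ≤ hausdorffDist (Icc c d) (Icc a b) :=
          infDist_le_hausdorffDist_of_mem (right_mem_Icc.2 hcd) (by rw [EMetric.hausdorffEdist_comm]; exact fin)
        rw [hausdorffDist_comm] at h1
        refine le_trans ?_ h1
        apply my_le_infDist (nonempty_Icc.2 hab)
        intro y hy
        rw [abs_sub_comm b d, abs_of_nonneg (by linarith [hy.2])]
        calc d - b ≤ d - y := by linarith [hy.2]
          _ ≤ |d - y| := le_abs_self _
          _ = dist d y := (Real.dist_eq d y).symm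

end HD

-- ===================== geometry of subcontinua of the unit interval =====================

instance : Fact ((0:ℝ) ≤ 1) := ⟨zero_le_one⟩

namespace Stmt14

abbrev I01 := ↥unitInterval

lemma val_image_Icc (a b : I01) : Subtype.val '' (Icc a b) = Icc (a:ℝ) (b:ℝ) := by
  ext x
  constructor
  · rintro ⟨y, hy, rfl⟩
    exact ⟨hy.1, hy.2⟩
  · intro hx
    have hx01 : x ∈ unitInterval := ⟨a.2.1.trans hx.1, hx.2.trans b.2.2⟩
    have hmem : (⟨x, hx01⟩ : I01) ∈ Icc a b :=
      ⟨Subtype.coe_le_coe.1 hx.1, Subtype.coe_le_coe.1 hx.2⟩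
    exact Set.mem_image_of_mem _ hmem

lemma exists_Icc (A : Subcontinua I01) :
    ∃ a b : I01, a ≤ b ∧ ((A.1 : Set I01)) = Icc a b := by
  obtain ⟨a, ha⟩ := A.1.isCompact.exists_isLeast A.1.nonempty
  obtain ⟨b, hb⟩ := A.1.isCompact.exists_isGreatest A.1.nonempty
  refine ⟨a, b, hb.2 ha.1, ?_⟩
  apply Subset.antisymm
  · intro x hx
    exact ⟨ha.2 hx, hb.2 hx⟩
  · exact A.2.isPreconnected.ordConnected.out ha.1 hb.1

noncomputable def lep (A : Subcontinua I01) : I01 := (exists_Icc A).choose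
noncomputable def rep (A : Subcontinua I01) : I01 := (exists_Icc A).choose_spec.choose

lemma lep_le_rep (A : Subcontinua I01) : lep A ≤ rep A :=
  (exists_Icc A).choose_spec.choose_spec.1

lemma coe_eq_Icc (A : Subcontinua I01) : (A.1 : Set I01) = Icc (lep A) (rep A) :=
  (exists_Icc A).choose_spec.choose_spec.2

lemma Icc_inj {α : Type*} [LinearOrder α] {a b c d : α} (hab : a ≤ b) (hcd : c ≤ d)
    (h : (Icc a b : Set α) = Icc c d) : a = c ∧ b = d := by
  have ha : a ∈ Icc c d := h ▸ left_mem_Icc.2 hab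
  have hc : c ∈ Icc a b := h.symm ▸ left_mem_Icc.2 hcd
  have hb : b ∈ Icc c d := h ▸ right_mem_Icc.2 hab
  have hd : d ∈ Icc a b := h.symm ▸ right_mem_Icc.2 hcd
  exact ⟨le_antisymm hc.1 ha.1, le_antisymm hb.2 hd.2⟩

/-- The subcontinuum `[min a b, max a b]`. -/
noncomputable def seg (a b : I01) : Subcontinua I01 :=
  ⟨⟨⟨Icc (min a b) (max a b), isClosed_Icc.isCompact⟩, Set.nonempty_Icc.2 (min_le_max)⟩,
    ⟨Set.nonempty_Icc.2 (min_le_max), isPreconnected_Icc⟩⟩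

lemma seg_coe {a b : I01} (hab : a ≤ b) : ((seg a b).1 : Set I01) = Icc a b := by
  simp [seg, min_eq_left hab, max_eq_right hab]

lemma lep_seg {a b : I01} (hab : a ≤ b) : lep (seg a b) = a ∧ rep (seg a b) = b :=
  Icc_inj (lep_le_rep _) hab ((coe_eq_Icc (seg a b)).symm.trans (seg_coe hab))

/-- distance between two interval-shaped nonempty compacts -/
lemma dist_Icc_I01 {a b c d : I01} (hab : a ≤ b) (hcd : c ≤ d)
    (A B : NonemptyCompacts I01) (hA : (A : Set I01) = Icc a b) (hB : (B : Set I01) = Icc c d) :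
    dist A B = max (dist a c) (dist b d) := by
  rw [Metric.NonemptyCompacts.dist_eq, hA, hB]
  have h1 : Metric.hausdorffDist (Icc a b : Set I01) (Icc c d) =
      Metric.hausdorffDist (Subtype.val '' (Icc a b) : Set ℝ) (Subtype.val '' (Icc c d)) :=
    (Metric.hausdorffDist_image isometry_subtype_coe).symm
  rw [h1, val_image_Icc, val_image_Icc,
    hausdorffDist_Icc_real hab hcd]
  rw [Subtype.dist_eq, Subtype.dist_eq, Real.dist_eq, Real.dist_eq]

lemma nndist_Icc_I01 {a b c d : I01} (hab : a ≤ b) (hcd : c ≤ d)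
    (A B : NonemptyCompacts I01) (hA : (A : Set I01) = Icc a b) (hB : (B : Set I01) = Icc c d) :
    nndist A B = max (nndist a c) (nndist b d) := by
  have h := dist_Icc_I01 hab hcd A B hA hB
  rw [dist_nndist, dist_nndist, dist_nndist, ← NNReal.coe_max, NNReal.coe_inj] at h
  exact h

lemma image_Icc_mono {α : Type*} [LinearOrder α] {g : α → α} (hg : StrictMono g)
    (hs : Function.Surjective g) (a b : α) : g '' Icc a b = Icc (g a) (g b) := by
  ext y
  constructor
  · rintro ⟨x, hx, rfl⟩
    exact ⟨hg.monotone hx.1, hg.monotone hx.2⟩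
  · intro hy
    obtain ⟨x, rfl⟩ := hs y
    exact ⟨x, ⟨hg.le_iff_le.1 hy.1, hg.le_iff_le.1 hy.2⟩, rfl⟩

lemma image_Icc_anti {α : Type*} [LinearOrder α] {g : α → α} (hg : StrictAnti g)
    (hs : Function.Surjective g) (a b : α) : g '' Icc a b = Icc (g b) (g a) := by
  ext y
  constructor
  · rintro ⟨x, hx, rfl⟩
    exact ⟨hg.antitone hx.2, hg.antitone hx.1⟩
  · intro hy
    obtain ⟨x, rfl⟩ := hs y
    exact ⟨x, ⟨hg.le_iff_ge.1 hy.2, hg.le_iff_ge.1 hy.1⟩, rfl⟩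

lemma iter_mono_or_anti (f : I01 ≃ₜ I01) (k : ℕ) :
    StrictMono (⇑f)^[k] ∨ StrictAnti (⇑f)^[k] := by
  induction k with
  | zero => exact Or.inl strictMono_id
  | succ k ih =>
    have hf : StrictMono ⇑f ∨ StrictAnti ⇑f :=
      f.continuous.strictMono_of_inj_boundedOrder' f.injective
    rw [Function.iterate_succ']
    rcases hf with h1 | h1 <;> rcases ih with h2 | h2
    · exact Or.inl (h1.comp h2)
    · exact Or.inr (h1.comp_strictAnti h2)
    · exact Or.inr (h1.comp_strictMono h2)
    · exact Or.inl (h1.comp h2)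

lemma inducedC_iter_coe (f : I01 ≃ₜ I01) (k : ℕ) (A : Subcontinua I01) :
    (((inducedC ⇑f f.continuous)^[k] A).1 : Set I01) = (⇑f)^[k] '' (A.1 : Set I01) := by
  induction k with
  | zero => simp
  | succ k ih =>
    rw [Function.iterate_succ_apply']
    have : (((inducedC ⇑f f.continuous) ((inducedC ⇑f f.continuous)^[k] A)).1 : Set I01)
        = ⇑f '' (((inducedC ⇑f f.continuous)^[k] A).1 : Set I01) := rfl
    rw [this, ih, Function.iterate_succ', Set.image_comp]

lemma nndist_iterC (f : I01 ≃ₜ I01) (k : ℕ) (A B : Subcontinua I01) :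
    nndist ((inducedC ⇑f f.continuous)^[k] A) ((inducedC ⇑f f.continuous)^[k] B)
      = max (nndist ((⇑f)^[k] (lep A)) ((⇑f)^[k] (lep B)))
          (nndist ((⇑f)^[k] (rep A)) ((⇑f)^[k] (rep B))) := by
  have hsurj : Function.Surjective (⇑f)^[k] := Function.Surjective.iterate f.surjective k
  have hA : (((inducedC ⇑f f.continuous)^[k] A).1 : Set I01)
      = (⇑f)^[k] '' Icc (lep A) (rep A) := by rw [inducedC_iter_coe, coe_eq_Icc]
  have hB : (((inducedC ⇑f f.continuous)^[k] B).1 : Set I01)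
      = (⇑f)^[k] '' Icc (lep B) (rep B) := by rw [inducedC_iter_coe, coe_eq_Icc]
  have hsub : nndist ((inducedC ⇑f f.continuous)^[k] A) ((inducedC ⇑f f.continuous)^[k] B)
      = nndist ((inducedC ⇑f f.continuous)^[k] A).1 ((inducedC ⇑f f.continuous)^[k] B).1 := rfl
  rcases iter_mono_or_anti f k with hm | hm
  · rw [hsub, nndist_Icc_I01 (hm.monotone (lep_le_rep A)) (hm.monotone (lep_le_rep B)) _ _
      (by rw [hA, image_Icc_mono hm hsurj]) (by rw [hB, image_Icc_mono hm hsurj])]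
  · rw [hsub, nndist_Icc_I01 (hm.antitone (lep_le_rep A)) (hm.antitone (lep_le_rep B)) _ _
      (by rw [hA, image_Icc_anti hm hsurj]) (by rw [hB, image_Icc_anti hm hsurj]), max_comm]

lemma dynDist_inducedC (f : I01 ≃ₜ I01) (n : ℕ) (A B : Subcontinua I01) :
    dynDist (inducedC ⇑f f.continuous) n A B
      = max (dynDist ⇑f n (lep A) (lep B)) (dynDist ⇑f n (rep A) (rep B)) := by
  unfold dynDist
  rw [← NNReal.coe_max, ← Finset.sup_sup]
  congr 1
  exact Finset.sup_congr rfl fun k _ => nndist_iterC f k A B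

end Stmt14

-- ===================== generic facts about dynDist and maxSep =====================

namespace Stmt14

section Dyn

variable {M : Type*} [MetricSpace M] {g : M → M} {n : ℕ} {ε : ℝ}

lemma dynDist_symm (g : M → M) (n : ℕ) (x y : M) : dynDist g n x y = dynDist g n y x := by
  unfold dynDist; congr 1; exact Finset.sup_congr rfl fun k _ => nndist_comm _ _

lemma dynDist_self (g : M → M) (n : ℕ) (x : M) : dynDist g n x x = 0 := by
  unfold dynDist
  norm_cast
  simp

lemma dist_le_dynDist {k : ℕ} (hk : k < n) (x y : M) :
    dist (g^[k] x) (g^[k] y) ≤ dynDist g n x y := by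
  have := Finset.le_sup (f := fun k => nndist (g^[k] x) (g^[k] y)) (Finset.mem_range.2 hk)
  rw [← coe_nndist]
  exact_mod_cast this

lemma dynDist_le_of' (hε : 0 ≤ ε) {x y : M} (h : ∀ k < n, dist (g^[k] x) (g^[k] y) ≤ ε) :
    dynDist g n x y ≤ ε := by
  unfold dynDist
  rw [show ε = ((Real.toNNReal ε : NNReal) : ℝ) from (Real.coe_toNNReal _ hε).symm]
  norm_cast
  apply Finset.sup_le
  intro k hk
  rw [← NNReal.coe_le_coe, coe_nndist, Real.coe_toNNReal _ hε]
  exact h k (Finset.mem_range.1 hk)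

lemma dynDist_triangle (x y z : M) :
    dynDist g n x z ≤ dynDist g n x y + dynDist g n y z := by
  unfold dynDist
  rw [← NNReal.coe_add]
  norm_cast
  apply Finset.sup_le
  intro k hk
  exact le_trans (nndist_triangle (g^[k] x) (g^[k] y) (g^[k] z))
    (add_le_add (Finset.le_sup (f := fun k => nndist (g^[k] x) (g^[k] y)) hk)
      (Finset.le_sup (f := fun k => nndist (g^[k] y) (g^[k] z)) hk))

/-- the separation set always contains `0` -/
lemma zero_mem_sepSet (g : M → M) (Y : Set M) (n : ℕ) (ε : ℝ) :
    0 ∈ {m : ℕ | ∃ E : Finset M, ↑E ⊆ Y ∧ E.card = m ∧ IsDynSeparated g n ε E} :=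
  ⟨∅, by simp, by simp, by intro x hx; simp at hx⟩

lemma le_maxSep {Y : Set M} {m : ℕ}
    (hbdd : BddAbove {m : ℕ | ∃ E : Finset M, ↑E ⊆ Y ∧ E.card = m ∧ IsDynSeparated g n ε E})
    (hm : m ∈ {m : ℕ | ∃ E : Finset M, ↑E ⊆ Y ∧ E.card = m ∧ IsDynSeparated g n ε E}) :
    m ≤ maxSep g Y n ε :=
  le_csSup hbdd hm

lemma maxSep_le {Y : Set M} {B : ℕ}
    (h : ∀ m ∈ {m : ℕ | ∃ E : Finset M, ↑E ⊆ Y ∧ E.card = m ∧ IsDynSeparated g n ε E}, m ≤ B) :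
    maxSep g Y n ε ≤ B :=
  csSup_le ⟨0, zero_mem_sepSet g Y n ε⟩ h

lemma maxSep_bddAbove [CompactSpace M] (hg : Continuous g) (hε : 0 < ε) (n : ℕ) (Y : Set M) :
    BddAbove {m : ℕ | ∃ E : Finset M, ↑E ⊆ Y ∧ E.card = m ∧ IsDynSeparated g n ε E} := by
  -- cover the space by finitely many sets of dynamical diameter < ε
  set U : M → Set M := fun x => ⋂ k ∈ Finset.range n, (g^[k]) ⁻¹' Metric.ball (g^[k] x) (ε/3)
    with hU
  have hUopen : ∀ x, IsOpen (U x) := fun x =>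
    isOpen_biInter_finset fun k _ => ((hg.iterate k).isOpen_preimage _ Metric.isOpen_ball)
  have hUmem : ∀ x, x ∈ U x := fun x =>
    Set.mem_biInter fun k _ => Metric.mem_ball_self (by linarith)
  obtain ⟨t, ht⟩ := isCompact_univ.elim_finite_subcover U hUopen
    (fun x _ => Set.mem_iUnion.2 ⟨x, hUmem x⟩)
  refine ⟨t.card, ?_⟩
  rintro m ⟨E, hEY, rfl, hsep⟩
  have key : ∀ e : M, ∃ x ∈ t, e ∈ U x := by
    intro e
    have := ht (Set.mem_univ e)
    simpa using this
  have hdyn : ∀ x e1 e2, e1 ∈ U x → e2 ∈ U x → dynDist g n e1 e2 < ε := by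
    intro x e1 e2 h1 h2
    have hle : dynDist g n e1 e2 ≤ 2 * (ε/3) := by
      apply dynDist_le_of' (by linarith)
      intro k hk
      have h1' : dist (g^[k] e1) (g^[k] x) < ε/3 := by
        have := Set.mem_iInter₂.1 h1 k (Finset.mem_range.2 hk)
        simpa [Metric.mem_ball] using this
      have h2' : dist (g^[k] e2) (g^[k] x) < ε/3 := by
        have := Set.mem_iInter₂.1 h2 k (Finset.mem_range.2 hk)
        simpa [Metric.mem_ball] using this
      calc dist (g^[k] e1) (g^[k] e2)
          ≤ dist (g^[k] e1) (g^[k] x) + dist (g^[k] x) (g^[k] e2) := dist_triangle _ _ _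
        _ = dist (g^[k] e1) (g^[k] x) + dist (g^[k] e2) (g^[k] x) := by rw [dist_comm (g^[k] x)]
        _ ≤ 2 * (ε/3) := by linarith
    linarith
  apply Finset.card_le_card_of_injOn (fun e => (key e).choose)
  · intro e _; exact (key e).choose_spec.1
  · intro e1 h1 e2 h2 heq
    by_contra hne
    have hsep' := hsep e1 h1 e2 h2 hne
    have heq' : (key e1).choose = (key e2).choose := heq
    have hmem2 := (key e2).choose_spec.2
    rw [← heq'] at hmem2
    have := hdyn ((key e1).choose) e1 e2 (key e1).choose_spec.2 hmem2
    linarith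

end Dyn
end Stmt14

-- ===================== maximal separated sets and counting =====================

namespace Stmt14

section Count

variable {M : Type*} [MetricSpace M] {g : M → M} {n : ℕ} {ε : ℝ}

lemma maxSep_attained {Y : Set M}
    (hbdd : BddAbove {m : ℕ | ∃ E : Finset M, ↑E ⊆ Y ∧ E.card = m ∧ IsDynSeparated g n ε E}) :
    ∃ E : Finset M, ↑E ⊆ Y ∧ E.card = maxSep g Y n ε ∧ IsDynSeparated g n ε E :=
  Nat.sSup_mem ⟨0, zero_mem_sepSet g Y n ε⟩ hbdd

/-- a maximum-cardinality separated set is spanning -/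
lemma maxSep_spanning (hε : 0 < ε)
    (hbdd : BddAbove {m : ℕ | ∃ E : Finset M, ↑E ⊆ (univ : Set M) ∧ E.card = m ∧
      IsDynSeparated g n ε E}) :
    ∃ E : Finset M, E.card = maxSep g (univ : Set M) n ε ∧ IsDynSeparated g n ε E ∧
      ∀ x : M, ∃ e ∈ E, dynDist g n x e < ε := by
  letI := Classical.decEq M
  obtain ⟨E, _, hcard, hsep⟩ := maxSep_attained (g := g) (n := n) (ε := ε) hbdd
  refine ⟨E, hcard, hsep, fun x => ?_⟩
  by_contra hcon
  push_neg at hcon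
  have hxE : x ∉ E := by
    intro hx
    have := hcon x hx
    rw [dynDist_self] at this
    linarith
  have hsep' : IsDynSeparated g n ε (insert x E) := by
    intro a ha b hb hab
    rcases Finset.mem_insert.1 ha with rfl | ha' <;> rcases Finset.mem_insert.1 hb with rfl | hb'
    · exact absurd rfl hab
    · exact hcon b hb'
    · rw [dynDist_symm]; exact hcon a ha'
    · exact hsep a ha' b hb' hab
  have hmem : (insert x E).card ∈ {m : ℕ | ∃ E : Finset M, ↑E ⊆ (univ : Set M) ∧ E.card = m ∧
      IsDynSeparated g n ε E} := ⟨insert x E, by simp, rfl, hsep'⟩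
  have hle : (insert x E).card ≤ maxSep g (univ : Set M) n ε := le_csSup hbdd hmem
  rw [Finset.card_insert_of_notMem hxE, hcard] at hle
  omega

end Count

section IntervalCount

variable (f : I01 ≃ₜ I01) {n : ℕ} {ε : ℝ}

/-- Upper bound: any separated family of subcontinua injects into pairs of a maximal
spanning set. -/
lemma card_le_sq (hε : 0 < ε) (n : ℕ) {F : Finset (Subcontinua I01)}
    (hF : IsDynSeparated (inducedC ⇑f f.continuous) n ε F) :
    F.card ≤ (maxSep ⇑f (univ : Set I01) n (ε/2)) ^ 2 := by
  obtain ⟨E, hcard, hsep, hspan⟩ := maxSep_spanning (g := ⇑f) (n := n) (half_pos hε)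
    (maxSep_bddAbove f.continuous (half_pos hε) n univ)
  have key : ∀ x : I01, ∃ e ∈ E, dynDist ⇑f n x e < ε/2 := hspan
  set π : I01 → I01 := fun x => (key x).choose with hπ
  have hπE : ∀ x, π x ∈ E := fun x => (key x).choose_spec.1
  have hπd : ∀ x, dynDist ⇑f n x (π x) < ε/2 := fun x => (key x).choose_spec.2
  have hinj : Set.InjOn (fun A => (π (lep A), π (rep A))) ↑F := by
    intro A hA B hB heq
    by_contra hne
    have hsep' := hF A hA B hB hne
    rw [dynDist_inducedC] at hsep'
    have h1 : dynDist ⇑f n (lep A) (lep B) < ε := by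
      have heq1 : π (lep A) = π (lep B) := congrArg Prod.fst heq
      calc dynDist ⇑f n (lep A) (lep B)
          ≤ dynDist ⇑f n (lep A) (π (lep A)) + dynDist ⇑f n (π (lep A)) (lep B) :=
            dynDist_triangle _ _ _
        _ = dynDist ⇑f n (lep A) (π (lep A)) + dynDist ⇑f n (lep B) (π (lep B)) := by
            rw [heq1, dynDist_symm ⇑f n (π (lep B)) (lep B)]
        _ < ε/2 + ε/2 := add_lt_add (hπd _) (hπd _)
        _ = ε := add_halves ε
    have h2 : dynDist ⇑f n (rep A) (rep B) < ε := by
      have heq2 : π (rep A) = π (rep B) := congrArg Prod.snd heq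
      calc dynDist ⇑f n (rep A) (rep B)
          ≤ dynDist ⇑f n (rep A) (π (rep A)) + dynDist ⇑f n (π (rep A)) (rep B) :=
            dynDist_triangle _ _ _
        _ = dynDist ⇑f n (rep A) (π (rep A)) + dynDist ⇑f n (rep B) (π (rep B)) := by
            rw [heq2, dynDist_symm ⇑f n (π (rep B)) (rep B)]
        _ < ε/2 + ε/2 := add_lt_add (hπd _) (hπd _)
        _ = ε := add_halves ε
    have := max_lt h1 h2
    linarith [hsep', this]
  have hmaps : ∀ A ∈ F, (π (lep A), π (rep A)) ∈ E ×ˢ E := fun A _ =>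
    Finset.mem_product.2 ⟨hπE _, hπE _⟩
  have hcards := Finset.card_le_card_of_injOn _ hmaps hinj
  rw [Finset.card_product] at hcards
  rw [pow_two, ← hcard]
  exact hcards

lemma maxSep_inducedC_le (hε : 0 < ε) (n : ℕ) :
    maxSep (inducedC ⇑f f.continuous) (univ : Set (Subcontinua I01)) n ε
      ≤ (maxSep ⇑f (univ : Set I01) n (ε/2)) ^ 2 := by
  apply maxSep_le
  rintro m ⟨F, _, rfl, hsep⟩
  exact card_le_sq f hε n hsep

lemma bddAbove_inducedC (hε : 0 < ε) (n : ℕ) :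
    BddAbove {m : ℕ | ∃ E : Finset (Subcontinua I01), ↑E ⊆ (univ : Set (Subcontinua I01)) ∧
      E.card = m ∧ IsDynSeparated (inducedC ⇑f f.continuous) n ε E} := by
  refine ⟨(maxSep ⇑f (univ : Set I01) n (ε/2)) ^ 2, ?_⟩
  rintro m ⟨F, _, rfl, hsep⟩
  exact card_le_sq f hε n hsep

/-- Lower bound: squares of separated sets give separated families of segments. -/
lemma sq_le_two_mul_maxSep (hε : 0 < ε) (n : ℕ) :
    (maxSep ⇑f (univ : Set I01) n ε) ^ 2
      ≤ 2 * maxSep (inducedC ⇑f f.continuous) (univ : Set (Subcontinua I01)) n ε := by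
  classical
  obtain ⟨E, _, hcard, hsep⟩ := maxSep_attained (g := ⇑f) (n := n) (ε := ε)
    (maxSep_bddAbove f.continuous hε n univ)
  set P : Finset (I01 × I01) := (E ×ˢ E).filter (fun p => p.1 ≤ p.2) with hP
  -- m^2 ≤ 2 * P.card
  have hsq : E.card ^ 2 ≤ 2 * P.card := by
    have hsplit : P.card + ((E ×ˢ E).filter (fun p => ¬ p.1 ≤ p.2)).card = E.card ^ 2 := by
      rw [hP]
      have h0 := Finset.card_filter_add_card_filter_not
        (s := E ×ˢ E) (p := fun p => p.1 ≤ p.2)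
      simpa [pow_two, Finset.card_product] using h0
    have hneg : ((E ×ˢ E).filter (fun p => ¬ p.1 ≤ p.2)).card ≤ P.card := by
      apply Finset.card_le_card_of_injOn Prod.swap
      · intro p hp
        rw [Finset.mem_coe, Finset.mem_filter] at hp
        rcases hp with ⟨hp1, hp2⟩
        rw [Finset.mem_product] at hp1
        rw [hP, Finset.mem_coe, Finset.mem_filter, Finset.mem_product]
        exact ⟨⟨hp1.2, hp1.1⟩, le_of_lt (lt_of_not_ge hp2)⟩
      · intro p _ q _ h
        exact Prod.swap_injective h
    omega
  -- the family of segments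
  have hseginj : Set.InjOn (fun p : I01 × I01 => seg p.1 p.2) ↑P := by
    intro p hp q hq heq
    rw [hP, Finset.coe_filter] at hp hq
    have hp2 : p.1 ≤ p.2 := hp.2
    have hq2 : q.1 ≤ q.2 := hq.2
    have heq' : seg p.1 p.2 = seg q.1 q.2 := heq
    have hcoe : ((seg p.1 p.2).1 : Set I01) = ((seg q.1 q.2).1 : Set I01) :=
      congrArg (fun A : Subcontinua I01 => ((A.1 : Set I01))) heq'
    rw [seg_coe hp2, seg_coe hq2] at hcoe
    obtain ⟨h1, h2⟩ := Icc_inj hp2 hq2 hcoe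
    exact Prod.ext h1 h2
  set F : Finset (Subcontinua I01) := P.image (fun p => seg p.1 p.2) with hF
  have hFcard : F.card = P.card := Finset.card_image_of_injOn hseginj
  have hFsep : IsDynSeparated (inducedC ⇑f f.continuous) n ε F := by
    intro A hA B hB hne
    rw [hF, Finset.mem_image] at hA hB
    obtain ⟨p, hp, rfl⟩ := hA
    obtain ⟨q, hq, rfl⟩ := hB
    rw [hP, Finset.mem_filter, Finset.mem_product] at hp hq
    obtain ⟨⟨hp1, hp2⟩, hple⟩ := hp
    obtain ⟨⟨hq1, hq2⟩, hqle⟩ := hq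
    obtain ⟨hlp, hrp⟩ := lep_seg hple
    obtain ⟨hlq, hrq⟩ := lep_seg hqle
    rw [dynDist_inducedC, hlp, hrp, hlq, hrq]
    have hpq : p ≠ q := fun h => hne (by rw [h])
    by_cases h1 : p.1 = q.1
    · have h2 : p.2 ≠ q.2 := fun h => hpq (Prod.ext h1 h)
      exact le_max_of_le_right (hsep p.2 hp2 q.2 hq2 h2)
    · exact le_max_of_le_left (hsep p.1 hp1 q.1 hq1 h1)
  have hmem : F.card ∈ {m : ℕ | ∃ E : Finset (Subcontinua I01),
      ↑E ⊆ (univ : Set (Subcontinua I01)) ∧ E.card = m ∧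
      IsDynSeparated (inducedC ⇑f f.continuous) n ε E} := ⟨F, by simp, rfl, hFsep⟩
  have hle : F.card ≤ maxSep (inducedC ⇑f f.continuous) (univ : Set (Subcontinua I01)) n ε :=
    le_csSup (bddAbove_inducedC f hε n) hmem
  rw [hFcard] at hle
  rw [← hcard]
  omega

lemma one_le_maxSep_f (hε : 0 < ε) (n : ℕ) : 1 ≤ maxSep ⇑f (univ : Set I01) n ε := by
  apply le_maxSep (maxSep_bddAbove f.continuous hε n univ)
  refine ⟨{⟨0, unitInterval.zero_mem⟩}, by simp, by simp, ?_⟩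
  intro x hx y hy hxy
  simp at hx hy
  exact absurd (hx.trans hy.symm) hxy

lemma one_le_maxSep_C (hε : 0 < ε) (n : ℕ) :
    1 ≤ maxSep (inducedC ⇑f f.continuous) (univ : Set (Subcontinua I01)) n ε := by
  apply le_maxSep (bddAbove_inducedC f hε n)
  refine ⟨{seg ⟨0, unitInterval.zero_mem⟩ ⟨0, unitInterval.zero_mem⟩}, by simp, by simp, ?_⟩
  intro x hx y hy hxy
  simp at hx hy
  exact absurd (hx.trans hy.symm) hxy

end IntervalCount
end Stmt14

-- ===================== limsup calculus =====================

namespace Stmt14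

open ENNReal

lemma limsup_add_le' (u v : ℕ → ℝ≥0∞) :
    Filter.atTop.limsup (fun n => u n + v n)
      ≤ Filter.atTop.limsup u + Filter.atTop.limsup v := by
  by_cases hU : Filter.atTop.limsup u = ⊤
  · rw [hU, top_add]; exact le_top
  by_cases hV : Filter.atTop.limsup v = ⊤
  · rw [hV, add_top]; exact le_top
  apply ENNReal.le_of_forall_pos_le_add
  intro ε hε _
  have hδ : ((ε : ℝ≥0∞))/2 ≠ 0 := by
    simp [ENNReal.div_eq_zero_iff, hε.ne']
  have hu : ∀ᶠ n in Filter.atTop, u n < Filter.atTop.limsup u + (ε : ℝ≥0∞)/2 :=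
    Filter.eventually_lt_of_limsup_lt (ENNReal.lt_add_right hU hδ)
  have hv : ∀ᶠ n in Filter.atTop, v n < Filter.atTop.limsup v + (ε : ℝ≥0∞)/2 :=
    Filter.eventually_lt_of_limsup_lt (ENNReal.lt_add_right hV hδ)
  have hev : ∀ᶠ n in Filter.atTop,
      u n + v n ≤ Filter.atTop.limsup u + Filter.atTop.limsup v + (ε : ℝ≥0∞) := by
    filter_upwards [hu, hv] with n h1 h2
    calc u n + v n ≤ (Filter.atTop.limsup u + (ε : ℝ≥0∞)/2)
          + (Filter.atTop.limsup v + (ε : ℝ≥0∞)/2) := add_le_add h1.le h2.le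
      _ = Filter.atTop.limsup u + Filter.atTop.limsup v + ((ε : ℝ≥0∞)/2 + (ε : ℝ≥0∞)/2) := by
          ring
      _ = Filter.atTop.limsup u + Filter.atTop.limsup v + (ε : ℝ≥0∞) := by
          rw [ENNReal.add_halves]
  exact Filter.limsup_le_of_le (by isBoundedDefault) hev

lemma tendsto_log2_div :
    Filter.Tendsto (fun n : ℕ => ENNReal.ofReal (Real.log 2 / Real.log n))
      Filter.atTop (nhds 0) := by
  have h1 : Filter.Tendsto (fun n : ℕ => Real.log 2 / Real.log n) Filter.atTop (nhds 0) :=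
    Filter.Tendsto.div_atTop tendsto_const_nhds
      (Real.tendsto_log_atTop.comp tendsto_natCast_atTop_atTop)
  have := (ENNReal.continuous_ofReal.tendsto 0).comp h1
  rw [ENNReal.ofReal_zero] at this
  exact this

lemma two_mul_limsup_le {s t : ℕ → ℕ} (hs1 : ∀ n, 1 ≤ s n) (ht1 : ∀ n, 1 ≤ t n)
    (h : ∀ n, (s n)^2 ≤ 2 * t n) :
    2 * (Filter.atTop.limsup fun n => ENNReal.ofReal (Real.log (s n) / Real.log n))
      ≤ Filter.atTop.limsup fun n => ENNReal.ofReal (Real.log (t n) / Real.log n) := by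
  rw [← ENNReal.limsup_const_mul_of_ne_top (by norm_num : (2:ℝ≥0∞) ≠ ⊤)]
  have hev : ∀ᶠ n in Filter.atTop,
      2 * ENNReal.ofReal (Real.log (s n) / Real.log n)
        ≤ ENNReal.ofReal (Real.log (t n) / Real.log n)
          + ENNReal.ofReal (Real.log 2 / Real.log n) := by
    filter_upwards [Filter.eventually_ge_atTop 2] with n hn
    have hlogn : (0:ℝ) < Real.log n := Real.log_pos (by exact_mod_cast hn)
    have hs0 : (1:ℝ) ≤ (s n : ℝ) := by exact_mod_cast hs1 n
    have ht0 : (1:ℝ) ≤ (t n : ℝ) := by exact_mod_cast ht1 n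
    have key : 2 * Real.log (s n) ≤ Real.log (t n) + Real.log 2 := by
      have h1 : Real.log ((s n : ℝ)^2) ≤ Real.log (2 * (t n : ℝ)) := by
        apply Real.log_le_log (by positivity)
        exact_mod_cast h n
      rw [Real.log_pow, Real.log_mul (by norm_num) (by linarith)] at h1
      push_cast at h1
      linarith
    have hreal : 2 * (Real.log (s n) / Real.log n)
        ≤ Real.log (t n) / Real.log n + Real.log 2 / Real.log n := by
      rw [← mul_div_assoc, ← add_div]
      gcongr
    calc 2 * ENNReal.ofReal (Real.log (s n) / Real.log n)
        = ENNReal.ofReal (2 * (Real.log (s n) / Real.log n)) := by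
          rw [ENNReal.ofReal_mul (by norm_num : (0:ℝ) ≤ 2)]
          norm_num
      _ ≤ ENNReal.ofReal (Real.log (t n) / Real.log n + Real.log 2 / Real.log n) :=
          ENNReal.ofReal_le_ofReal hreal
      _ ≤ _ := ENNReal.ofReal_add_le
  calc Filter.atTop.limsup (fun n => 2 * ENNReal.ofReal (Real.log (s n) / Real.log n))
      ≤ Filter.atTop.limsup (fun n => ENNReal.ofReal (Real.log (t n) / Real.log n)
          + ENNReal.ofReal (Real.log 2 / Real.log n)) :=
        Filter.limsup_le_limsup hev
    _ ≤ (Filter.atTop.limsup fun n => ENNReal.ofReal (Real.log (t n) / Real.log n))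
          + Filter.atTop.limsup (fun n : ℕ => ENNReal.ofReal (Real.log 2 / Real.log n)) :=
        limsup_add_le' _ _
    _ = _ := by rw [tendsto_log2_div.limsup_eq, add_zero]

lemma limsup_le_two_mul {t s : ℕ → ℕ} (ht1 : ∀ n, 1 ≤ t n) (h : ∀ n, t n ≤ (s n)^2) :
    (Filter.atTop.limsup fun n => ENNReal.ofReal (Real.log (t n) / Real.log n))
      ≤ 2 * Filter.atTop.limsup fun n => ENNReal.ofReal (Real.log (s n) / Real.log n) := by
  rw [← ENNReal.limsup_const_mul_of_ne_top (by norm_num : (2:ℝ≥0∞) ≠ ⊤)]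
  apply Filter.limsup_le_limsup ?_ (by isBoundedDefault) (by isBoundedDefault)
  filter_upwards [Filter.eventually_ge_atTop 2] with n hn
  have hlogn : (0:ℝ) < Real.log n := Real.log_pos (by exact_mod_cast hn)
  have ht0 : (1:ℝ) ≤ (t n : ℝ) := by exact_mod_cast ht1 n
  have hs1 : 1 ≤ s n := by nlinarith [h n, ht1 n, sq_nonneg (s n)]
  have hs0 : (1:ℝ) ≤ (s n : ℝ) := by exact_mod_cast hs1
  have key : Real.log (t n) ≤ 2 * Real.log (s n) := by
    have h1 : Real.log (t n : ℝ) ≤ Real.log ((s n : ℝ)^2) := by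
      apply Real.log_le_log (by linarith)
      exact_mod_cast h n
    rw [Real.log_pow] at h1
    push_cast at h1
    linarith
  have hreal : Real.log (t n) / Real.log n ≤ 2 * (Real.log (s n) / Real.log n) := by
    rw [← mul_div_assoc]
    gcongr
  calc ENNReal.ofReal (Real.log (t n) / Real.log n)
      ≤ ENNReal.ofReal (2 * (Real.log (s n) / Real.log n)) := ENNReal.ofReal_le_ofReal hreal
    _ = 2 * ENNReal.ofReal (Real.log (s n) / Real.log n) := by
        rw [ENNReal.ofReal_mul (by norm_num : (0:ℝ) ≤ 2)]
        norm_num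

end Stmt14

-- STATEMENT 14
open Stmt14 in
theorem stmt14 (f : ↥unitInterval ≃ₜ ↥unitInterval) :
    polEnt (inducedC ⇑f f.continuous) Set.univ = 2 * polEnt ⇑f Set.univ := by
  apply le_antisymm
  · unfold polEnt
    refine iSup₂_le fun ε hε => ?_
    have hb := limsup_le_two_mul
      (t := fun n => maxSep (inducedC ⇑f f.continuous) (Set.univ : Set (Subcontinua I01)) n ε)
      (s := fun n => maxSep ⇑f (Set.univ : Set I01) n (ε/2))
      (fun n => one_le_maxSep_C f hε n) (fun n => maxSep_inducedC_le f hε n)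
    refine hb.trans ?_
    refine mul_le_mul_right ?_ 2
    exact le_iSup₂ (f := fun δ (_ : 0 < δ) => Filter.atTop.limsup fun n : ℕ =>
      ENNReal.ofReal (Real.log (maxSep ⇑f (Set.univ : Set I01) n δ) / Real.log n))
      (ε/2) (half_pos hε)
  · unfold polEnt
    rw [ENNReal.mul_iSup]
    refine iSup_le fun ε => ?_
    rw [ENNReal.mul_iSup]
    refine iSup_le fun hε => ?_
    refine le_trans (two_mul_limsup_le
      (s := fun n => maxSep ⇑f (Set.univ : Set I01) n ε)
      (t := fun n => maxSep (inducedC ⇑f f.continuous) (Set.univ : Set (Subcontinua I01)) n ε)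
      (fun n => one_le_maxSep_f f hε n) (fun n => one_le_maxSep_C f hε n)
      (fun n => sq_le_two_mul_maxSep f hε n)) ?_
    exact le_iSup₂ (f := fun δ (_ : 0 < δ) => Filter.atTop.limsup fun n : ℕ =>
      ENNReal.ofReal (Real.log (maxSep (inducedC ⇑f f.continuous)
        (Set.univ : Set (Subcontinua I01)) n δ) / Real.log n)) ε hε
end

section
/- Let f : [0,1] → [0,1] be a homeomorphism whose set of non-wandering points is finite. Then h_pol(f) = 1. -/
open Filter Topology TopologicalSpace Set
open scoped ENNReal

private lemma monoOrAnti (f : ↥unitInterval ≃ₜ ↥unitInterval) :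
    StrictMono ⇑f ∨ StrictAnti ⇑f := by
  haveI : Fact ((0:ℝ) ≤ 1) := ⟨zero_le_one⟩
  exact Continuous.strictMono_of_inj_boundedOrder' f.continuous f.injective

private lemma monoOrAnti_iterate {α : Type*} [Preorder α] {φ : α → α}
    (h : StrictMono φ ∨ StrictAnti φ) (k : ℕ) :
    StrictMono (φ^[k]) ∨ StrictAnti (φ^[k]) := by
  induction k with
  | zero => exact Or.inl strictMono_id
  | succ k ih =>
    rw [Function.iterate_succ']
    rcases h with h | h <;> rcases ih with ih | ih
    · exact Or.inl (h.comp ih)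
    · exact Or.inr (h.comp_strictAnti ih)
    · exact Or.inr (h.comp_strictMono ih)
    · exact Or.inl (h.comp ih)

private lemma sep_card_le (f : ↥unitInterval ≃ₜ ↥unitInterval) {ε : ℝ} (hε : 0 < ε) (n : ℕ)
    (E : Finset ↥unitInterval) (hE : IsDynSeparated ⇑f n ε E) :
    E.card ≤ n * ⌊1/ε⌋₊ + 1 := by
  by_cases hcard : E.card ≤ 1
  · omega
  push_neg at hcard
  have hn : 1 ≤ n := by
    by_contra hn
    push_neg at hn
    interval_cases n
    obtain ⟨a, ha, b, hb, hab⟩ := Finset.one_lt_card.1 hcard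
    have := hE a ha b hb hab
    simp only [dynDist, Finset.range_zero, Finset.sup_empty] at this
    norm_num at this
    linarith
  obtain ⟨m, hm⟩ : ∃ m, E.card = m + 1 := ⟨E.card - 1, by omega⟩
  set χ : Fin (m+1) ↪o ↥unitInterval := E.orderEmbOfFin hm with hχ
  set x : ℕ → ↥unitInterval := fun i => χ ⟨min i m, by omega⟩ with hx
  have hxmono : Monotone x := by
    intro i j hij
    exact χ.monotone (by simp only [Fin.mk_le_mk]; omega)
  have hstep : ∀ i < m, x i < x (i+1) := by
    intro i hi
    exact χ.strictMono (by simp only [Fin.mk_lt_mk]; omega)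
  have hmem : ∀ i, x i ∈ E := fun i => E.orderEmbOfFin_mem hm _
  have hkey : ∀ i : ℕ, ∃ k : ℕ, i < m →
      k < n ∧ ε ≤ dist ((⇑f)^[k] (x i)) ((⇑f)^[k] (x (i+1))) := by
    intro i
    by_cases hi : i < m
    · have h1 : ε ≤ dynDist ⇑f n (x i) (x (i+1)) :=
        hE _ (hmem i) _ (hmem (i+1)) (hstep i hi).ne
      obtain ⟨k, hk, hks⟩ := Finset.exists_mem_eq_sup (Finset.range n)
        ⟨0, Finset.mem_range.2 hn⟩
        (fun k => nndist ((⇑f)^[k] (x i)) ((⇑f)^[k] (x (i+1))))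
      refine ⟨k, fun _ => ⟨Finset.mem_range.1 hk, ?_⟩⟩
      unfold dynDist at h1
      rw [hks] at h1
      rwa [coe_nndist] at h1
    · exact ⟨0, fun h => absurd h hi⟩
  choose g hg using hkey
  have hfib : ∀ k, ((Finset.range m).filter fun i => g i = k).card ≤ ⌊1/ε⌋₊ := by
    intro k
    set F := (Finset.range m).filter fun i => g i = k with hF
    set v : ℕ → ℝ := fun i => ((⇑f)^[k] (x i) : ℝ) with hv
    have hmem01 : ∀ i, v i ∈ Set.Icc (0:ℝ) 1 := fun i => ((⇑f)^[k] (x i)).2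
    have hsum : ∑ i ∈ Finset.range m, |v (i+1) - v i| ≤ 1 := by
      rcases monoOrAnti_iterate (monoOrAnti f) k with hmono | hanti
      · have hvm : Monotone v := fun i j hij =>
          Subtype.coe_le_coe.2 (hmono.monotone (hxmono hij))
        have habs : ∀ i ∈ Finset.range m, |v (i+1) - v i| = v (i+1) - v i := fun i _ =>
          abs_of_nonneg (sub_nonneg.2 (hvm (Nat.le_succ i)))
        rw [Finset.sum_congr rfl habs, Finset.sum_range_sub]
        have h1 := (hmem01 m).2
        have h2 := (hmem01 0).1
        linarith
      · have hvm : Antitone v := fun i j hij =>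
          Subtype.coe_le_coe.2 (hanti.antitone (hxmono hij))
        have habs : ∀ i ∈ Finset.range m, |v (i+1) - v i| = v i - v (i+1) := fun i _ =>
          abs_sub_comm (v (i+1)) (v i) ▸ abs_of_nonneg (sub_nonneg.2 (hvm (Nat.le_succ i)))
        rw [Finset.sum_congr rfl habs, Finset.sum_range_sub']
        have h1 := (hmem01 0).2
        have h2 := (hmem01 m).1
        linarith
    have hεF : ∀ i ∈ F, ε ≤ |v (i+1) - v i| := by
      intro i hi
      rw [hF, Finset.mem_filter, Finset.mem_range] at hi
      have h2 := (hg i hi.1).2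
      rw [hi.2] at h2
      rwa [Subtype.dist_eq, Real.dist_eq, abs_sub_comm] at h2
    have hc : (F.card : ℝ) * ε ≤ 1 :=
      calc (F.card : ℝ) * ε = ∑ _i ∈ F, ε := by rw [Finset.sum_const, nsmul_eq_mul]
        _ ≤ ∑ i ∈ F, |v (i+1) - v i| := Finset.sum_le_sum hεF
        _ ≤ ∑ i ∈ Finset.range m, |v (i+1) - v i| :=
            Finset.sum_le_sum_of_subset_of_nonneg (Finset.filter_subset _ _)
              (fun i _ _ => abs_nonneg _)
        _ ≤ 1 := hsum
    exact Nat.le_floor (by rw [le_div_iff₀ hε]; exact hc)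
  have hcount : (Finset.range m).card =
      ∑ k ∈ Finset.range n, ((Finset.range m).filter fun i => g i = k).card :=
    Finset.card_eq_sum_card_fiberwise
      (fun i hi => Finset.mem_range.2 (hg i (Finset.mem_range.1 hi)).1)
  have hmn : m ≤ n * ⌊1/ε⌋₊ := by
    rw [Finset.card_range] at hcount
    calc m = _ := hcount
      _ ≤ ∑ _k ∈ Finset.range n, ⌊1/ε⌋₊ := Finset.sum_le_sum (fun k _ => hfib k)
      _ = n * ⌊1/ε⌋₊ := by rw [Finset.sum_const, Finset.card_range, smul_eq_mul]
  omega

private lemma maxSep_bdd (f : ↥unitInterval ≃ₜ ↥unitInterval) {ε : ℝ} (hε : 0 < ε) (n : ℕ) :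
    BddAbove {m : ℕ | ∃ E : Finset ↥unitInterval,
      (↑E : Set ↥unitInterval) ⊆ Set.univ ∧ E.card = m ∧ IsDynSeparated ⇑f n ε E} :=
  ⟨n * ⌊1/ε⌋₊ + 1, by rintro m ⟨E, -, rfl, hsep⟩; exact sep_card_le f hε n E hsep⟩

private lemma maxSep_le (f : ↥unitInterval ≃ₜ ↥unitInterval) {ε : ℝ} (hε : 0 < ε) (n : ℕ) :
    maxSep ⇑f Set.univ n ε ≤ n * ⌊1/ε⌋₊ + 1 := by
  unfold maxSep
  refine csSup_le ?_ ?_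
  · exact ⟨0, ∅, by simp, Finset.card_empty,
      fun a ha => absurd ha (Finset.notMem_empty a)⟩
  · rintro m ⟨E, -, rfl, hsep⟩
    exact sep_card_le f hε n E hsep

private lemma one_le_maxSep (f : ↥unitInterval ≃ₜ ↥unitInterval) {ε : ℝ} (hε : 0 < ε) (n : ℕ) :
    1 ≤ maxSep ⇑f Set.univ n ε := by
  unfold maxSep
  apply le_csSup (maxSep_bdd f hε n)
  refine ⟨{⟨0, unitInterval.zero_mem⟩}, by simp, Finset.card_singleton _, ?_⟩
  intro a ha b hb hab
  rw [Finset.mem_singleton] at ha hb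
  exact absurd (ha.trans hb.symm) hab

private lemma orbit_apart {g : ↥unitInterval ≃ₜ ↥unitInterval} (hg : StrictMono ⇑g)
    {x : ↥unitInterval} (hx : ⇑g x ≠ x) :
    ∀ m, 1 ≤ m → dist (⇑g x) x ≤ dist ((⇑g)^[m] x) x := by
  intro m hm
  obtain ⟨m', rfl⟩ : ∃ m', m = m' + 1 := ⟨m - 1, by omega⟩
  rcases lt_or_gt_of_ne hx with hlt | hgt
  · -- g x < x : decreasing orbit
    have h1 : ∀ k, (⇑g)^[k+1] x ≤ ⇑g x := by
      intro k
      induction k with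
      | zero => simp
      | succ k ih =>
        rw [Function.iterate_succ_apply']
        exact le_trans (hg.monotone ih) (hg.monotone hlt.le)
    have h2 := h1 m'
    rw [Subtype.dist_eq, Subtype.dist_eq, Real.dist_eq, Real.dist_eq]
    have h3 : ((⇑g)^[m'+1] x : ℝ) ≤ (⇑g x : ℝ) := Subtype.coe_le_coe.2 h2
    have h4 : ((⇑g) x : ℝ) < (x : ℝ) := Subtype.coe_lt_coe.2 hlt
    rw [abs_of_nonpos (by linarith), abs_of_nonpos (by linarith)]
    linarith
  · -- x < g x : increasing orbit
    have h1 : ∀ k, ⇑g x ≤ (⇑g)^[k+1] x := by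
      intro k
      induction k with
      | zero => simp
      | succ k ih =>
        rw [Function.iterate_succ_apply']
        exact le_trans (hg.monotone hgt.le) (hg.monotone ih)
    have h2 := h1 m'
    rw [Subtype.dist_eq, Subtype.dist_eq, Real.dist_eq, Real.dist_eq]
    have h3 : ((⇑g) x : ℝ) ≤ ((⇑g)^[m'+1] x : ℝ) := Subtype.coe_le_coe.2 h2
    have h4 : ((x : ℝ)) < ((⇑g) x : ℝ) := Subtype.coe_lt_coe.2 hgt
    rw [abs_of_nonneg (by linarith), abs_of_nonneg (by linarith)]
    linarith

private lemma maxSep_ge (f : ↥unitInterval ≃ₜ ↥unitInterval)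
    (hNW : (nonWandering ⇑f).Finite) :
    ∃ ε : ℝ, 0 < ε ∧ ∀ n : ℕ, 1 ≤ n → (n : ℝ) / 2 ≤ (maxSep ⇑f Set.univ n ε : ℝ) := by
  set g : ↥unitInterval ≃ₜ ↥unitInterval := f.trans f with hgdef
  have hgit : (⇑f)^[2] = ⇑g := by
    funext z
    simp [hgdef, Function.iterate_succ_apply']
  -- there is a point not fixed by f²
  have hinf : Infinite ↥unitInterval :=
    Set.infinite_coe_iff.2 (Set.Icc_infinite zero_lt_one)
  have hx0 : ∃ x : ↥unitInterval, ⇑g x ≠ x := by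
    by_contra h
    push_neg at h
    have huniv : nonWandering ⇑f = Set.univ := by
      ext p
      simp only [Set.mem_univ, iff_true, nonWandering, Set.mem_setOf_eq]
      intro U hU
      refine ⟨2, one_le_two, p, ⟨p, mem_of_mem_nhds hU, ?_⟩, mem_of_mem_nhds hU⟩
      rw [hgit]; exact h p
    rw [huniv] at hNW
    exact Set.infinite_univ hNW
  obtain ⟨x0, hx0⟩ := hx0
  -- g is strictly monotone
  have hg : StrictMono ⇑g := by
    have hco : ⇑g = ⇑f ∘ ⇑f := rfl
    rcases monoOrAnti f with h | h
    · rw [hco]; exact h.comp h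
    · rw [hco]; exact h.comp h
  set ε : ℝ := dist (⇑g x0) x0 with hεdef
  have hε : 0 < ε := dist_pos.2 hx0
  refine ⟨ε, hε, ?_⟩
  intro n hn
  set m : ℕ := (n-1)/2 with hmdef
  set y : ℕ → ↥unitInterval := fun i => (⇑g.symm)^[i] x0 with hy
  have hli : Function.LeftInverse ⇑g ⇑g.symm := g.apply_symm_apply
  have hit : ∀ i, (⇑g)^[i] (y i) = x0 := fun i => (hli.iterate i) x0
  have horb : ∀ i j, i ≤ j → (⇑g)^[j] (y i) = (⇑g)^[j-i] x0 := by
    intro i j hij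
    have : (⇑g)^[j-i+i] (y i) = (⇑g)^[j-i] ((⇑g)^[i] (y i)) :=
      Function.iterate_add_apply _ _ _ _
    rw [hit i] at this
    rw [← this]
    congr 1
    omega
  have hsepij : ∀ i j, i < j → 2*j < n → ε ≤ dynDist ⇑f n (y i) (y j) := by
    intro i j hij hjn
    have h1 : dist ((⇑f)^[2*j] (y i)) ((⇑f)^[2*j] (y j)) =
        dist ((⇑g)^[j-i] x0) x0 := by
      have h2 : (⇑f)^[2*j] = (⇑g)^[j] := by rw [Function.iterate_mul, hgit]
      rw [h2, horb i j hij.le, hit j]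
    have h3 : ε ≤ dist ((⇑f)^[2*j] (y i)) ((⇑f)^[2*j] (y j)) := by
      rw [h1, hεdef]
      exact orbit_apart hg hx0 (j-i) (by omega)
    calc ε ≤ _ := h3
      _ ≤ dynDist ⇑f n (y i) (y j) := by
          unfold dynDist
          rw [← coe_nndist]
          exact_mod_cast Finset.le_sup (f := fun k =>
            nndist ((⇑f)^[k] (y i)) ((⇑f)^[k] (y j))) (Finset.mem_range.2 hjn)
  have hyinj : ∀ i j, i < j → y i ≠ y j := by
    intro i j hij hne
    have h1 : (⇑g)^[j] (y i) = (⇑g)^[j] (y j) := by rw [hne]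
    rw [horb i j hij.le, hit j] at h1
    have := orbit_apart hg hx0 (j-i) (by omega)
    rw [h1] at this
    simp only [dist_self] at this
    exact absurd (le_antisymm this dist_nonneg) (ne_of_gt hε)
  have hinj : Function.Injective y := by
    intro i j hij
    rcases lt_trichotomy i j with h | h | h
    · exact absurd hij (hyinj i j h)
    · exact h
    · exact absurd hij.symm (hyinj j i h)
  set E : Finset ↥unitInterval := (Finset.range (m+1)).image y with hE
  have hcard : E.card = m + 1 := by
    rw [hE, Finset.card_image_of_injective _ hinj, Finset.card_range]
  have hsym : ∀ a b, dynDist ⇑f n a b = dynDist ⇑f n b a := by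
    intro a b
    unfold dynDist
    norm_cast
    apply Finset.sup_congr rfl
    intro k _
    exact nndist_comm _ _
  have hsep : IsDynSeparated ⇑f n ε E := by
    intro a ha b hb hab
    rw [hE, Finset.mem_image] at ha hb
    obtain ⟨i, hi, rfl⟩ := ha
    obtain ⟨j, hj, rfl⟩ := hb
    rw [Finset.mem_range] at hi hj
    have h2j : ∀ c, c ≤ m → 2*c < n := by intro c hc; omega
    rcases lt_trichotomy i j with h | h | h
    · exact hsepij i j h (h2j j (by omega))
    · exact absurd (congrArg y h) hab
    · rw [hsym]; exact hsepij j i h (h2j i (by omega))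
  have hle : m + 1 ≤ maxSep ⇑f Set.univ n ε := by
    unfold maxSep
    exact le_csSup (maxSep_bdd f hε n) ⟨E, Set.subset_univ _, hcard, hsep⟩
  have h2 : n ≤ 2 * (m + 1) := by omega
  have h3 : (n : ℝ) ≤ 2 * ((m : ℝ) + 1) := by exact_mod_cast h2
  have h4 : ((m : ℝ) + 1) ≤ (maxSep ⇑f Set.univ n ε : ℝ) := by exact_mod_cast hle
  linarith

private lemma limsup_le_one (f : ↥unitInterval ≃ₜ ↥unitInterval) {ε : ℝ} (hε : 0 < ε) :
    (Filter.atTop.limsup fun n : ℕ =>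
      ENNReal.ofReal (Real.log (maxSep ⇑f Set.univ n ε) / Real.log n)) ≤ 1 := by
  set C : ℝ := (⌊1/ε⌋₊ : ℝ) + 1 with hCdef
  have hC1 : (1:ℝ) ≤ C := by
    rw [hCdef]
    exact le_add_of_nonneg_left (Nat.cast_nonneg _)
  have htop : Tendsto (fun n : ℕ => (1 : ℝ) + Real.log C / Real.log n) atTop (𝓝 1) := by
    have h1 : Tendsto (fun n : ℕ => Real.log (n:ℝ)) atTop atTop :=
      Real.tendsto_log_atTop.comp tendsto_natCast_atTop_atTop
    have h2 : Tendsto (fun n : ℕ => Real.log C / Real.log n) atTop (𝓝 0) :=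
      Tendsto.div_atTop tendsto_const_nhds h1
    simpa using tendsto_const_nhds.add h2
  have hofreal : Tendsto
      (fun n : ℕ => ENNReal.ofReal (1 + Real.log C / Real.log n)) atTop (𝓝 1) := by
    have h := (ENNReal.continuous_ofReal.tendsto 1).comp htop
    simpa [Function.comp_def] using h
  refine le_trans (Filter.limsup_le_limsup ?_) (le_of_eq hofreal.limsup_eq)
  filter_upwards [eventually_ge_atTop 2] with n hn
  apply ENNReal.ofReal_le_ofReal
  have hn1 : (1:ℝ) < (n:ℝ) := by exact_mod_cast (by omega : 1 < n)
  have hlogn : 0 < Real.log n := Real.log_pos hn1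
  have hms1 : (1:ℝ) ≤ (maxSep ⇑f Set.univ n ε : ℝ) := by
    exact_mod_cast one_le_maxSep f hε n
  have hmsle : (maxSep ⇑f Set.univ n ε : ℝ) ≤ n * C := by
    have h := maxSep_le f hε n
    have h' : (maxSep ⇑f Set.univ n ε : ℝ) ≤ ((n * ⌊1/ε⌋₊ + 1 : ℕ) : ℝ) := by
      exact_mod_cast h
    push_cast at h'
    have hn2 : (1:ℝ) ≤ (n:ℝ) := hn1.le
    rw [hCdef]
    nlinarith
  have hlog : Real.log (maxSep ⇑f Set.univ n ε : ℝ) ≤ Real.log n + Real.log C :=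
    calc Real.log (maxSep ⇑f Set.univ n ε : ℝ) ≤ Real.log ((n:ℝ) * C) :=
          Real.log_le_log (by linarith) hmsle
      _ = Real.log n + Real.log C := Real.log_mul (by positivity) (by positivity)
  calc Real.log (maxSep ⇑f Set.univ n ε : ℝ) / Real.log n
      ≤ (Real.log n + Real.log C) / Real.log n := by gcongr
    _ = 1 + Real.log C / Real.log n := by field_simp

private lemma one_le_limsup (f : ↥unitInterval ≃ₜ ↥unitInterval) {ε : ℝ} (hε : 0 < ε)
    (hge : ∀ n : ℕ, 1 ≤ n → (n:ℝ)/2 ≤ (maxSep ⇑f Set.univ n ε : ℝ)) :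
    1 ≤ Filter.atTop.limsup fun n : ℕ =>
      ENNReal.ofReal (Real.log (maxSep ⇑f Set.univ n ε) / Real.log n) := by
  have htop : Tendsto (fun n : ℕ => (1 : ℝ) - Real.log 2 / Real.log n) atTop (𝓝 1) := by
    have h1 : Tendsto (fun n : ℕ => Real.log (n:ℝ)) atTop atTop :=
      Real.tendsto_log_atTop.comp tendsto_natCast_atTop_atTop
    have h2 : Tendsto (fun n : ℕ => Real.log 2 / Real.log n) atTop (𝓝 0) :=
      Tendsto.div_atTop tendsto_const_nhds h1
    simpa using tendsto_const_nhds.sub h2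
  have hofreal : Tendsto
      (fun n : ℕ => ENNReal.ofReal (1 - Real.log 2 / Real.log n)) atTop (𝓝 1) := by
    have h := (ENNReal.continuous_ofReal.tendsto 1).comp htop
    simpa [Function.comp_def] using h
  refine le_trans (le_of_eq hofreal.limsup_eq.symm) (Filter.limsup_le_limsup ?_)
  filter_upwards [eventually_ge_atTop 2] with n hn
  apply ENNReal.ofReal_le_ofReal
  have hn1 : (1:ℝ) < (n:ℝ) := by exact_mod_cast (by omega : 1 < n)
  have hlogn : 0 < Real.log n := Real.log_pos hn1
  have h1 : (n:ℝ)/2 ≤ (maxSep ⇑f Set.univ n ε : ℝ) := hge n (by omega)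
  have h2 : Real.log ((n:ℝ)/2) ≤ Real.log (maxSep ⇑f Set.univ n ε : ℝ) :=
    Real.log_le_log (by positivity) h1
  have h3 : Real.log ((n:ℝ)/2) = Real.log n - Real.log 2 :=
    Real.log_div (by positivity) two_ne_zero
  calc (1:ℝ) - Real.log 2 / Real.log n
      = (Real.log n - Real.log 2) / Real.log n := by field_simp
    _ ≤ Real.log (maxSep ⇑f Set.univ n ε : ℝ) / Real.log n := by
        gcongr
        rw [← h3]; exact h2


-- STATEMENT 15
theorem stmt15 (f : ↥unitInterval ≃ₜ ↥unitInterval) (hNW : (nonWandering ⇑f).Finite) :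
    polEnt ⇑f Set.univ = 1 := by
  obtain ⟨ε₀, hε₀, hge⟩ := maxSep_ge f hNW
  unfold polEnt
  apply le_antisymm
  · exact iSup_le fun ε => iSup_le fun hε => limsup_le_one f hε
  · exact le_trans (one_le_limsup f hε₀ hge) (le_iSup_of_le ε₀ (le_iSup_of_le hε₀ le_rfl))
end
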